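/- arXiv:1611.03147 — 5 statements merged into one kernel-verified Lean document; each statement's English description precedes it below -/
import Mathlib

section
/- If a Motzkin path x of length 2n (n > 1) has an up step at height zero in position n (i.e., starting at height 0 at x-coordinate n-1) or a down step ending at height zero in position n+1, then the area of x is strictly less than n^2/2 + 2n. -/
/-- A step of an `s`-colored Motzkin path: an up step with a color,
a flat step, or a down step with a color. -/
inductive MStep (s : ℕ) : Type
  | up (c : Fin s) : MStep s
  | flat : MStep s
  | down (c : Fin s) : MStep s
  deriving DecidableEq

/-- Height change of a step. -/
def MStep.h {s : ℕ} : MStep s → ℤ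
  | .up _ => 1
  | .flat => 0
  | .down _ => -1

/-- Height of the path `x` after `j` steps. -/
def height {s : ℕ} (x : List (MStep s)) (j : ℕ) : ℤ :=
  ((x.take j).map MStep.h).sum

/-- Stack-based checker: `isMotzkinAux stack x` holds iff, starting with the
stack of colors of currently unmatched up steps, the list `x` stays weakly
above the axis, ends with an empty stack (height 0), and every down step
carries the color of its matching up step. -/
def isMotzkinAux {s : ℕ} : List (Fin s) → List (MStep s) → Prop
  | stack, [] => stack = []
  | stack, (MStep.up c) :: rest => isMotzkinAux (c :: stack) rest
  | stack, MStep.flat :: rest => isMotzkinAux stack rest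
  | [], (MStep.down _) :: _ => False
  | (c :: stack), (MStep.down c') :: rest => c = c' ∧ isMotzkinAux stack rest

/-- `x` is an `s`-colored Motzkin path (of its own length): it goes from
height 0 to height 0, never below the axis, with matched colors. -/
def isMotzkin {s : ℕ} (x : List (MStep s)) : Prop := isMotzkinAux [] x

/-- Twice the area between the path and the x-axis. -/
def area2 {s : ℕ} (x : List (MStep s)) : ℤ :=
  ∑ j ∈ Finset.range x.length, (height x j + height x (j + 1))

/-- The area between the path and the x-axis: a flat step at height `h`
contributes `h`, an up/down step between heights `h` and `h+1` contributes
`h + 1/2`. -/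
def area {s : ℕ} (x : List (MStep s)) : ℚ := (area2 x : ℚ) / 2

-- aux lemmas
lemma height_succ_bound {s : ℕ} (x : List (MStep s)) (j : ℕ) :
    height x j - 1 ≤ height x (j + 1) ∧ height x (j + 1) ≤ height x j + 1 := by
  have h : height x (j+1) = height x j + ((x[j]?.toList.map MStep.h).sum) := by
    simp [height, List.take_succ]
  rcases hj : x[j]? with _ | a
  · rw [h, hj]; simp
  · rw [h, hj]; cases a <;> simp [MStep.h] <;> omega

lemma height_lip {s : ℕ} (x : List (MStep s)) (j : ℕ) : ∀ d : ℕ,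
    height x (j + d) ≤ height x j + d ∧ height x j ≤ height x (j + d) + d := by
  intro d
  induction d with
  | zero => simp
  | succ d ih =>
    have h := height_succ_bound x (j + d)
    have : j + (d+1) = (j + d) + 1 := by ring
    rw [this]
    push_cast
    constructor <;> linarith [ih.1, ih.2, h.1, h.2]

lemma height_zero {s : ℕ} (x : List (MStep s)) : height x 0 = 0 := by simp [height]

lemma aux_sum {s : ℕ} : ∀ (x : List (MStep s)) (stack : List (Fin s)),
    isMotzkinAux stack x → (x.map MStep.h).sum = -(stack.length : ℤ)
  | [], stack, h => by
      simp only [isMotzkinAux] at h; subst h; simp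
  | (MStep.up c) :: rest, stack, h => by
      simp only [isMotzkinAux] at h
      have := aux_sum rest (c :: stack) h
      simp [MStep.h, this]
  | MStep.flat :: rest, stack, h => by
      simp only [isMotzkinAux] at h
      have := aux_sum rest stack h
      simp [MStep.h, this]
  | (MStep.down c') :: rest, [], h => by
      simp only [isMotzkinAux] at h
  | (MStep.down c') :: rest, (c :: stack), h => by
      simp only [isMotzkinAux] at h
      have := aux_sum rest stack h.2
      simp [MStep.h, this]

lemma height_total {s : ℕ} (x : List (MStep s)) (hx : isMotzkin x) :
    height x x.length = 0 := by
  have := aux_sum x [] hx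
  simpa [height, List.take_length] using this

-- the triangle sum
def S (m : ℕ) : ℕ := ∑ j ∈ Finset.range (m+1), min j (m - j)

lemma S_step (m : ℕ) : S (m+2) = S m + (m+1) := by
  unfold S
  rw [Finset.sum_range_succ' (fun j => min j (m + 2 - j)) (m+2)]
  rw [Finset.sum_range_succ]
  have h1 : ∀ j ∈ Finset.range (m+1), min (j+1) (m + 2 - (j+1)) = min j (m - j) + 1 := by
    intro j hj
    simp only [Finset.mem_range] at hj
    omega
  rw [Finset.sum_congr rfl h1, Finset.sum_add_distrib]
  simp

lemma S_bound : ∀ m : ℕ, 4 * S m ≤ m ^ 2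
  | 0 => by decide
  | 1 => by decide
  | (m+2) => by
      rw [S_step]
      have := S_bound m
      nlinarith

lemma T_eq (m : ℕ) :
    (∑ j ∈ Finset.range m, (min j (m - j) + min (j+1) (m - (j+1)))) = 2 * S m := by
  rw [Finset.sum_add_distrib]
  have h1 : (∑ j ∈ Finset.range m, min j (m - j)) = S m := by
    unfold S
    rw [Finset.sum_range_succ]
    simp
  have h2 : (∑ j ∈ Finset.range m, min (j+1) (m - (j+1))) = S m := by
    unfold S
    rw [Finset.sum_range_succ' (fun j => min j (m - j)) m]
    simp
  rw [h1, h2]; ring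

lemma key {s n : ℕ} (x : List (MStep s)) (hx : isMotzkin x) (hlen : x.length = 2*n)
    (m : ℕ) (hm : m ≤ 2*n) (h0 : height x m = 0) :
    area2 x ≤ 2 * S m + 2 * S (2*n - m) := by
  set k := 2*n - m with hk
  have hmk : m + k = 2*n := by omega
  have htot : height x (2*n) = 0 := by rw [← hlen]; exact height_total x hx
  -- basic bounds
  have hub1 : ∀ j : ℕ, j ≤ m → height x j ≤ (min j (m - j) : ℕ) := by
    intro j hj
    have h1 := (height_lip x 0 j).1
    rw [height_zero] at h1
    have h2 := (height_lip x j (m - j)).2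
    have : j + (m - j) = m := by omega
    rw [this, h0] at h2
    simp only [Nat.cast_min]
    refine le_min ?_ ?_
    · simpa using h1
    · simpa using h2
  have hub2 : ∀ i : ℕ, i ≤ k → height x (m + i) ≤ (min i (k - i) : ℕ) := by
    intro i hi
    have h1 := (height_lip x m i).1
    rw [h0] at h1
    have h2 := (height_lip x (m + i) (k - i)).2
    have : m + i + (k - i) = 2*n := by omega
    rw [this, htot] at h2
    simp only [Nat.cast_min]
    refine le_min ?_ ?_
    · simpa using h1
    · simpa using h2
  -- split the sum
  rw [area2, hlen, ← hmk, Finset.sum_range_add]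
  have hp1 : (∑ j ∈ Finset.range m, (height x j + height x (j+1)))
      ≤ ((2 * S m : ℕ) : ℤ) := by
    rw [← T_eq m]
    push_cast
    refine Finset.sum_le_sum ?_
    intro j hj
    simp only [Finset.mem_range] at hj
    have b1 := hub1 j (by omega)
    have b2 := hub1 (j+1) (by omega)
    push_cast at b1 b2 ⊢
    linarith
  have hp2 : (∑ i ∈ Finset.range k, (height x (m + i) + height x (m + i + 1)))
      ≤ ((2 * S k : ℕ) : ℤ) := by
    rw [← T_eq k]
    push_cast
    refine Finset.sum_le_sum ?_
    intro i hi
    simp only [Finset.mem_range] at hi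
    have b1 := hub2 i (by omega)
    have b2 := hub2 (i+1) (by omega)
    have : m + i + 1 = m + (i + 1) := by ring
    rw [this]
    push_cast at b1 b2 ⊢
    linarith
  push_cast at hp1 hp2 ⊢
  linarith


/-- If a Motzkin path of length 2n (n > 1) has an up step at height zero in
position n, or a down step ending at height zero in position n+1, then its
area is strictly less than n²/2 + 2n. -/
theorem stmt3 (s n : ℕ) (hn : 1 < n) (x : List (MStep s))
    (hx : isMotzkin x) (hlen : x.length = 2 * n)
    (hB : (∃ c, x[n - 1]? = some (MStep.up c) ∧ height x (n - 1) = 0) ∨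
          (∃ c, x[n]? = some (MStep.down c) ∧ height x (n + 1) = 0)) :
    area x < (n : ℚ) ^ 2 / 2 + 2 * n := by
  have hbound : area2 x ≤ n^2 + 1 := by
    rcases hB with ⟨c, _, h0⟩ | ⟨c, _, h0⟩
    · have hm : n - 1 ≤ 2*n := by omega
      have h := key x hx hlen (n-1) hm h0
      have hk : 2*n - (n-1) = n + 1 := by omega
      rw [hk] at h
      have b1 := S_bound (n-1)
      have b2 := S_bound (n+1)
      have hn1 : (((n:ℤ) - 1))^2 + ((n:ℤ)+1)^2 = 2*n^2 + 2 := by ring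
      have c1 : ((n - 1 : ℕ) : ℤ) = (n:ℤ) - 1 := by push_cast [Nat.cast_sub (by omega : 1 ≤ n)]; ring
      -- 4*(S(n-1)+S(n+1)) ≤ (n-1)^2+(n+1)^2 = 2n^2+2, area2 ≤ 2S+2S ≤ (2n^2+2)/2 = n^2+1
      have : (4 : ℤ) * (S (n-1)) ≤ ((n-1:ℕ):ℤ)^2 := by exact_mod_cast b1
      have h2 : (4 : ℤ) * (S (n+1)) ≤ ((n+1:ℕ):ℤ)^2 := by exact_mod_cast b2
      rw [c1] at this
      push_cast at h2 h ⊢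
      nlinarith
    · have hm : n + 1 ≤ 2*n := by omega
      have h := key x hx hlen (n+1) hm h0
      have hk : 2*n - (n+1) = n - 1 := by omega
      rw [hk] at h
      have b1 := S_bound (n-1)
      have b2 := S_bound (n+1)
      have c1 : ((n - 1 : ℕ) : ℤ) = (n:ℤ) - 1 := by push_cast [Nat.cast_sub (by omega : 1 ≤ n)]; ring
      have : (4 : ℤ) * (S (n-1)) ≤ ((n-1:ℕ):ℤ)^2 := by exact_mod_cast b1
      have h2 : (4 : ℤ) * (S (n+1)) ≤ ((n+1:ℕ):ℤ)^2 := by exact_mod_cast b2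
      rw [c1] at this
      push_cast at h2 h ⊢
      nlinarith
  rw [area]
  have hq : (area2 x : ℚ) ≤ (n:ℚ)^2 + 1 := by exact_mod_cast hbound
  have hn2 : (2 : ℚ) ≤ n := by exact_mod_cast hn
  linarith
end

section
/- The partition function satisfies p(a) <= exp(pi * sqrt(2a/3)) for all a >= 1. -/
open Finset Real

lemma geom_partial_le {r : ℝ} (h0 : 0 ≤ r) (h1 : r < 1) (m : ℕ) :
    ∑ c ∈ Finset.range m, r ^ c ≤ (1 - r)⁻¹ := by
  have h2 : (0:ℝ) < 1 - r := by linarith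
  have key : (∑ c ∈ Finset.range m, r ^ c) * (1 - r) = 1 - r ^ m := by
    have := geom_sum_mul r m
    nlinarith [this]
  have hm : (0:ℝ) ≤ r ^ m := by positivity
  calc ∑ c ∈ Finset.range m, r ^ c = (1 - r ^ m) / (1 - r) := by
        rw [eq_div_iff h2.ne']; exact key
    _ ≤ 1 / (1 - r) := by gcongr; linarith
    _ = (1 - r)⁻¹ := one_div _

lemma pow_ratio_le {x : ℝ} (hx0 : 0 < x) (hx1 : x < 1) (m : ℕ) (hm : 1 ≤ m) :
    x ^ m / (1 - x ^ m) ≤ x / (m * (1 - x)) := by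
  have h2 : (0:ℝ) < 1 - x := by linarith
  have hgeom : (1 : ℝ) - x ^ m = (1 - x) * ∑ i ∈ Finset.range m, x ^ i := by
    have := geom_sum_mul x m
    nlinarith [this]
  have hge : (m : ℝ) * x ^ (m - 1) ≤ ∑ i ∈ Finset.range m, x ^ i := by
    calc (m : ℝ) * x ^ (m-1) = ∑ _i ∈ Finset.range m, x ^ (m-1) := by
          rw [Finset.sum_const, Finset.card_range, nsmul_eq_mul]
      _ ≤ ∑ i ∈ Finset.range m, x ^ i := by
          apply Finset.sum_le_sum
          intro i hi
          have hi2 : i ≤ m - 1 := by have := Finset.mem_range.mp hi; omega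
          exact pow_le_pow_of_le_one hx0.le hx1.le hi2
  have hxm1 : (0:ℝ) < x ^ (m-1) := by positivity
  have hden : (0:ℝ) < 1 - x ^ m := by
    have : x ^ m < 1 := pow_lt_one₀ hx0.le hx1 (by omega)
    linarith
  have hden2 : (0:ℝ) < (m:ℝ) * (1 - x) := by
    have : (0:ℝ) < (m:ℝ) := by exact_mod_cast hm
    positivity
  rw [div_le_div_iff₀ hden hden2]
  have hxm : x ^ m = x ^ (m-1) * x := by
    rw [← pow_succ]; congr 1; omega
  calc x ^ m * ((m:ℝ) * (1 - x)) = x * ((1-x) * ((m:ℝ) * x ^ (m-1))) := by rw [hxm]; ring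
    _ ≤ x * ((1-x) * ∑ i ∈ Finset.range m, x ^ i) := by
        apply mul_le_mul_of_nonneg_left _ hx0.le
        exact mul_le_mul_of_nonneg_left hge h2.le
    _ = x * (1 - x ^ m) := by rw [hgeom]


-- every part of a partition of n is in [1, n], and counts are ≤ n
lemma part_mem_le {n : ℕ} (P : n.Partition) {k : ℕ} (hk : k ∈ P.parts) :
    1 ≤ k ∧ k ≤ n := by
  refine ⟨P.parts_pos hk, ?_⟩
  calc k ≤ P.parts.sum := Multiset.single_le_sum (fun _ _ => Nat.zero_le _) _ hk
    _ = n := P.parts_sum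

lemma count_le {n : ℕ} (P : n.Partition) (k : ℕ) : P.parts.count k ≤ n := by
  calc P.parts.count k ≤ Multiset.card P.parts := Multiset.count_le_card _ _
    _ = Multiset.card P.parts • 1 := by simp
    _ ≤ P.parts.sum := Multiset.card_nsmul_le_sum (fun x hx => (part_mem_le P hx).1)
    _ = n := P.parts_sum

lemma sum_counts {n : ℕ} (P : n.Partition) :
    ∑ i : Fin n, ((i : ℕ) + 1) * P.parts.count ((i : ℕ) + 1) = n := by
  have hsub : P.parts.toFinset ⊆ Finset.Icc 1 n := by
    intro k hk
    rw [Multiset.mem_toFinset] at hk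
    exact Finset.mem_Icc.mpr (part_mem_le P hk)
  have h1 : P.parts.sum = ∑ k ∈ Finset.Icc 1 n, P.parts.count k • k :=
    Finset.sum_multiset_count_of_subset P.parts _ hsub
  have h2 : ∑ k ∈ Finset.Icc 1 n, P.parts.count k • k
      = ∑ j ∈ Finset.range n, (j + 1) * P.parts.count (j + 1) := by
    apply Finset.sum_bij' (fun k _ => k - 1) (fun j _ => j + 1) <;> intro a ha <;>
      simp only [Finset.mem_Icc, Finset.mem_range, smul_eq_mul] at * <;>
      first
        | omega
        | (rw [Nat.sub_add_cancel ha.1]; ring)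
  rw [Fin.sum_univ_eq_sum_range (fun j => (j + 1) * P.parts.count (j + 1)), ← h2, ← h1,
    P.parts_sum]

lemma part_card_mul_le (n : ℕ) {x : ℝ} (hx0 : 0 < x) (hx1 : x < 1) :
    (Fintype.card (Nat.Partition n) : ℝ) * x ^ n
      ≤ ∏ i : Fin n, (1 - x ^ ((i : ℕ) + 1))⁻¹ := by
  classical
  set Φ : Nat.Partition n → (Fin n → ℕ) := fun P i => P.parts.count ((i : ℕ) + 1) with hΦ
  have hmem : ∀ P : Nat.Partition n, Φ P ∈ Fintype.piFinset fun _ : Fin n =>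
      Finset.range (n + 1) := by
    intro P
    rw [Fintype.mem_piFinset]
    intro i
    exact Finset.mem_range.mpr (Nat.lt_succ_of_le (count_le P _))
  have hinj : Function.Injective Φ := by
    intro P Q h
    ext1
    ext k
    rcases Nat.eq_zero_or_pos k with rfl | hk
    · rw [Multiset.count_eq_zero_of_notMem, Multiset.count_eq_zero_of_notMem]
      · exact fun hc => absurd (part_mem_le Q hc).1 (by omega)
      · exact fun hc => absurd (part_mem_le P hc).1 (by omega)
    rcases le_or_gt k n with hkn | hkn
    · have : (⟨k - 1, by omega⟩ : Fin n) = ⟨k - 1, by omega⟩ := rfl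
      have := congrFun h (⟨k - 1, by omega⟩ : Fin n)
      simpa [hΦ, Nat.sub_add_cancel hk] using this
    · rw [Multiset.count_eq_zero_of_notMem, Multiset.count_eq_zero_of_notMem]
      · exact fun hc => absurd (part_mem_le Q hc).2 (by omega)
      · exact fun hc => absurd (part_mem_le P hc).2 (by omega)
  calc (Fintype.card (Nat.Partition n) : ℝ) * x ^ n
      = ∑ _P : Nat.Partition n, x ^ n := by
        rw [Finset.sum_const, Finset.card_univ, nsmul_eq_mul]
    _ = ∑ P : Nat.Partition n, ∏ i : Fin n, (x ^ ((i:ℕ)+1)) ^ (Φ P i) := by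
        refine Finset.sum_congr rfl fun P _ => ?_
        conv_lhs => rw [← sum_counts P]
        rw [← Finset.prod_pow_eq_pow_sum]
        exact Finset.prod_congr rfl fun i _ => (pow_mul x _ _)
    _ = ∑ f ∈ Finset.image Φ Finset.univ, ∏ i : Fin n, (x ^ ((i:ℕ)+1)) ^ (f i) := by
        rw [Finset.sum_image (fun P _ Q _ h => hinj h)]
    _ ≤ ∑ f ∈ Fintype.piFinset (fun _ : Fin n => Finset.range (n+1)),
          ∏ i : Fin n, (x ^ ((i:ℕ)+1)) ^ (f i) := by
        apply Finset.sum_le_sum_of_subset_of_nonneg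
        · intro f hf
          rw [Finset.mem_image] at hf
          obtain ⟨P, _, rfl⟩ := hf
          exact hmem P
        · intro f _ _
          positivity
    _ = ∏ i : Fin n, ∑ c ∈ Finset.range (n+1), (x ^ ((i:ℕ)+1)) ^ c :=
        (Finset.prod_univ_sum _ _).symm
    _ ≤ ∏ i : Fin n, (1 - x ^ ((i:ℕ)+1))⁻¹ := by
        apply Finset.prod_le_prod
        · intro i _
          exact Finset.sum_nonneg fun c _ => by positivity
        · intro i _
          exact geom_partial_le (by positivity) (pow_lt_one₀ hx0.le hx1 (by omega)) _

lemma basel_shift : HasSum (fun j : ℕ => (1:ℝ)/((j:ℝ)+1)^2) (π^2/6) := by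
  have h0 : HasSum (fun n : ℕ => (1:ℝ)/(n:ℝ)^2) (π^2/6) := hasSum_zeta_two
  have h := (hasSum_nat_add_iff' (f := fun n : ℕ => (1:ℝ)/(n:ℝ)^2) 1).mpr h0
  norm_num at h
  simpa using h

lemma log_sum_le (n : ℕ) {x : ℝ} (hx0 : 0 < x) (hx1 : x < 1) :
    ∑ i : Fin n, -Real.log (1 - x ^ ((i:ℕ)+1)) ≤ π^2/6 * (x / (1-x)) := by
  have h1x : (0:ℝ) < 1 - x := by linarith
  have hxpow : ∀ m : ℕ, 1 ≤ m → x ^ m < 1 := fun m hm => pow_lt_one₀ hx0.le hx1 (by omega)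
  set f : Fin n → ℕ → ℝ := fun i j => (x ^ ((i:ℕ)+1)) ^ (j+1) / (j+1) with hf
  have hhs : ∀ i : Fin n, HasSum (f i) (-Real.log (1 - x ^ ((i:ℕ)+1))) := by
    intro i
    exact hasSum_pow_div_log_of_abs_lt_one
      (by rw [abs_of_nonneg (by positivity)]; exact hxpow _ (by omega))
  have hswap : ∑ i : Fin n, -Real.log (1 - x ^ ((i:ℕ)+1))
      = ∑' j : ℕ, ∑ i : Fin n, f i j := by
    rw [Summable.tsum_finsetSum (fun i _ => (hhs i).summable)]
    exact Finset.sum_congr rfl fun i _ => ((hhs i).tsum_eq).symm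
  rw [hswap]
  have hbound : ∀ j : ℕ, ∑ i : Fin n, f i j ≤ x/(1-x) * ((1:ℝ)/((j:ℝ)+1)^2) := by
    intro j
    have hr0 : (0:ℝ) < x ^ (j+1) := by positivity
    have hr1 : x ^ (j+1) < 1 := hxpow _ (by omega)
    have step1 : ∑ i : Fin n, f i j
        = (∑ i : Fin n, (x ^ (j+1)) ^ ((i:ℕ)+1)) / ((j:ℝ)+1) := by
      rw [Finset.sum_div]
      refine Finset.sum_congr rfl fun i _ => ?_
      rw [hf]
      simp only
      rw [← pow_mul, ← pow_mul, Nat.mul_comm]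
    have step2 : ∑ i : Fin n, (x ^ (j+1)) ^ ((i:ℕ)+1) ≤ x ^ (j+1) / (1 - x ^ (j+1)) := by
      have : ∑ i : Fin n, (x ^ (j+1)) ^ ((i:ℕ)+1)
          = x ^ (j+1) * ∑ i ∈ Finset.range n, (x ^ (j+1)) ^ i := by
        rw [Finset.mul_sum, ← Fin.sum_univ_eq_sum_range (fun i => x^(j+1) * (x ^ (j+1)) ^ i)]
        exact Finset.sum_congr rfl fun i _ => by rw [pow_succ, mul_comm]
      rw [this, div_eq_mul_inv]
      exact mul_le_mul_of_nonneg_left (geom_partial_le hr0.le hr1 n) hr0.le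
    have step3 : x ^ (j+1) / (1 - x ^ (j+1)) ≤ x / (((j:ℝ)+1) * (1-x)) := by
      have := pow_ratio_le hx0 hx1 (j+1) (by omega)
      convert this using 3
      push_cast; ring
    have hj1 : (0:ℝ) < (j:ℝ)+1 := by positivity
    calc ∑ i : Fin n, f i j
        = (∑ i : Fin n, (x ^ (j+1)) ^ ((i:ℕ)+1)) / ((j:ℝ)+1) := step1
      _ ≤ (x ^ (j+1) / (1 - x ^ (j+1))) / ((j:ℝ)+1) := by
          apply div_le_div_of_nonneg_right step2 hj1.le |>.trans_eq rfl
      _ ≤ (x / (((j:ℝ)+1) * (1-x))) / ((j:ℝ)+1) := by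
          apply div_le_div_of_nonneg_right step3 hj1.le |>.trans_eq rfl
      _ = x/(1-x) * ((1:ℝ)/((j:ℝ)+1)^2) := by
          rw [div_div, div_mul_div_comm, mul_one]
          congr 1
          ring
  calc ∑' j : ℕ, ∑ i : Fin n, f i j
      ≤ ∑' j : ℕ, x/(1-x) * ((1:ℝ)/((j:ℝ)+1)^2) := by
        apply Summable.tsum_le_tsum hbound
        · exact summable_sum (fun i _ => (hhs i).summable)
        · exact (basel_shift.mul_left _).summable
    _ = x/(1-x) * (π^2/6) := (basel_shift.mul_left _).tsum_eq
    _ = π^2/6 * (x/(1-x)) := mul_comm _ _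


/-- The partition function satisfies p(a) ≤ exp(π √(2a/3)) for all a ≥ 1. -/
theorem stmt8 (a : ℕ) (ha : 1 ≤ a) :
    (Fintype.card (Nat.Partition a) : ℝ) ≤ Real.exp (Real.pi * Real.sqrt (2 * a / 3)) := by
  have ha1 : (1:ℝ) ≤ (a:ℝ) := by exact_mod_cast ha
  have h6a : (0:ℝ) < 6 * a := by linarith
  set s := Real.sqrt (6 * a) with hsdef
  have hs0 : 0 < s := Real.sqrt_pos.mpr h6a
  have hs2 : s ^ 2 = 6 * a := Real.sq_sqrt h6a.le
  set t := π / s with htdef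
  have ht0 : 0 < t := div_pos Real.pi_pos hs0
  set x := 1 / (1 + t) with hxdef
  have h1t : (0:ℝ) < 1 + t := by linarith
  have hx0 : 0 < x := by rw [hxdef]; positivity
  have hx1 : x < 1 := by rw [hxdef, div_lt_one h1t]; linarith
  have h1x : 0 < 1 - x := by linarith
  have hxr : x / (1 - x) = 1 / t := by
    rw [hxdef]
    field_simp
    rw [add_sub_cancel_left, div_self ht0.ne']
  have hpos : ∀ i : Fin a, 0 < 1 - x ^ ((i:ℕ) + 1) := by
    intro i
    have := pow_lt_one₀ hx0.le hx1 (by omega : (i:ℕ) + 1 ≠ 0)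
    linarith
  have hexp : ∏ i : Fin a, (1 - x ^ ((i:ℕ)+1))⁻¹
      = Real.exp (∑ i : Fin a, -Real.log (1 - x ^ ((i:ℕ)+1))) := by
    rw [Real.exp_sum]
    refine Finset.prod_congr rfl fun i _ => ?_
    rw [Real.exp_neg, Real.exp_log (hpos i)]
  have key : (Fintype.card (Nat.Partition a) : ℝ) * x ^ a
      ≤ Real.exp (π^2/6 * (1/t)) := by
    calc (Fintype.card (Nat.Partition a) : ℝ) * x ^ a
        ≤ ∏ i : Fin a, (1 - x ^ ((i:ℕ)+1))⁻¹ := part_card_mul_le a hx0 hx1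
      _ = Real.exp (∑ i : Fin a, -Real.log (1 - x ^ ((i:ℕ)+1))) := hexp
      _ ≤ Real.exp (π^2/6 * (x/(1-x))) := Real.exp_le_exp.mpr (log_sum_le a hx0 hx1)
      _ = Real.exp (π^2/6 * (1/t)) := by rw [hxr]
  have hxa : (0:ℝ) < x ^ a := by positivity
  have hinv : (x ^ a)⁻¹ = Real.exp ((a:ℝ) * Real.log (1 + t)) := by
    rw [Real.exp_nat_mul, Real.exp_log h1t, hxdef, one_div, inv_pow, inv_inv]
  have hlog : Real.log (1 + t) ≤ t := by
    have := Real.log_le_sub_one_of_pos h1t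
    linarith
  have h1 : π^2/6 * (1/t) = π * s / 6 := by
    rw [htdef]
    field_simp
  have h2 : (a:ℝ) * t = π * s / 6 := by
    rw [htdef]
    field_simp
    linear_combination -hs2
  have hsqrt : Real.sqrt (2 * a / 3) = s / 3 := by
    rw [show (2 * (a:ℝ) / 3) = (s/3)^2 by rw [div_pow, hs2]; ring,
      Real.sqrt_sq (by positivity)]
  calc (Fintype.card (Nat.Partition a) : ℝ)
      = (Fintype.card (Nat.Partition a) : ℝ) * x ^ a * (x ^ a)⁻¹ := by
        field_simp
    _ ≤ Real.exp (π^2/6 * (1/t)) * (x ^ a)⁻¹ := by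
        exact mul_le_mul_of_nonneg_right key (by positivity)
    _ = Real.exp (π^2/6 * (1/t) + (a:ℝ) * Real.log (1 + t)) := by
        rw [hinv, ← Real.exp_add]
    _ ≤ Real.exp (π^2/6 * (1/t) + (a:ℝ) * t) := by
        apply Real.exp_le_exp.mpr
        have : (a:ℝ) * Real.log (1 + t) ≤ (a:ℝ) * t :=
          mul_le_mul_of_nonneg_left hlog (Nat.cast_nonneg a)
        linarith
    _ = Real.exp (π * Real.sqrt (2 * a / 3)) := by
        rw [h1, h2, hsqrt]
        congr 1
        ring
end

section
/- Let s >= 2, and consider s-colored Motzkin paths of length 2n with local moves: swapping a flat step with an adjacent up or down step (0u^k <-> u^k 0, 0d^k <-> d^k 0), and replacing two adjacent flat steps by a same-colored peak (00 <-> u^k d^k). Any sequence of local moves transforming a prime path whose first-step color is i into a prime path whose first-step color is j != i must pass through a path in B, where B is the set of paths having an up step at height zero in position n or a down step reaching height zero in position n+1. -/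
/-- The area-increasing local moves on two adjacent steps:
`0uᵏ → uᵏ0`, `dᵏ0 → 0dᵏ`, and `00 → uᵏdᵏ`. -/
inductive IncPair (s : ℕ) : List (MStep s) → List (MStep s) → Prop
  | upFlat (c : Fin s) : IncPair s [MStep.flat, MStep.up c] [MStep.up c, MStep.flat]
  | downFlat (c : Fin s) : IncPair s [MStep.down c, MStep.flat] [MStep.flat, MStep.down c]
  | peak (c : Fin s) : IncPair s [MStep.flat, MStep.flat] [MStep.up c, MStep.down c]

/-- A local move: replace two adjacent steps according to one of the moves
`0uᵏ ↔ uᵏ0`, `0dᵏ ↔ dᵏ0`, `00 ↔ uᵏdᵏ`. -/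
def LocalMove {s : ℕ} (x y : List (MStep s)) : Prop :=
  ∃ a b p q, (IncPair s p q ∨ IncPair s q p) ∧ x = a ++ p ++ b ∧ y = a ++ q ++ b

/-- The bottleneck: paths with an up step at height zero in position n, or a
down step reaching height zero in position n+1. -/
def bottleneck (s n : ℕ) : Set (List (MStep s)) :=
  {x | (∃ c, x[n - 1]? = some (MStep.up c) ∧ height x (n - 1) = 0) ∨
       (∃ c, x[n]? = some (MStep.down c) ∧ height x (n + 1) = 0)}

/- ================= auxiliary development ================= -/

lemma aux_nil {s : ℕ} (st : List (Fin s)) : isMotzkinAux st ([] : List (MStep s)) ↔ st = [] := by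
  simp [isMotzkinAux]

lemma aux_up {s : ℕ} (st : List (Fin s)) (c : Fin s) (r : List (MStep s)) :
    isMotzkinAux st (.up c :: r) ↔ isMotzkinAux (c :: st) r := by simp [isMotzkinAux]

lemma aux_flat {s : ℕ} (st : List (Fin s)) (r : List (MStep s)) :
    isMotzkinAux st (.flat :: r) ↔ isMotzkinAux st r := by simp [isMotzkinAux]

lemma aux_down_nil {s : ℕ} (c : Fin s) (r : List (MStep s)) :
    isMotzkinAux [] (.down c :: r) ↔ False := by simp [isMotzkinAux]

lemma aux_down_cons {s : ℕ} (st : List (Fin s)) (c' c : Fin s) (r : List (MStep s)) :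
    isMotzkinAux (c' :: st) (.down c :: r) ↔ c' = c ∧ isMotzkinAux st r := by
  simp [isMotzkinAux]

/-- Stack of colors of unmatched up steps after processing `x`. -/
def stk {s : ℕ} : List (Fin s) → List (MStep s) → List (Fin s)
  | st, [] => st
  | st, .up c :: r => stk (c :: st) r
  | st, .flat :: r => stk st r
  | st, .down _ :: r => stk st.tail r

@[simp] lemma stk_nil {s : ℕ} (st : List (Fin s)) : stk st ([] : List (MStep s)) = st := by
  simp [stk]

@[simp] lemma stk_up {s : ℕ} (st : List (Fin s)) (c : Fin s) (r : List (MStep s)) :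
    stk st (.up c :: r) = stk (c :: st) r := by simp [stk]

@[simp] lemma stk_flat {s : ℕ} (st : List (Fin s)) (r : List (MStep s)) :
    stk st (.flat :: r) = stk st r := by simp [stk]

@[simp] lemma stk_down {s : ℕ} (st : List (Fin s)) (c : Fin s) (r : List (MStep s)) :
    stk st (.down c :: r) = stk st.tail r := by simp [stk]

lemma stk_append {s : ℕ} (l1 l2 : List (MStep s)) (st : List (Fin s)) :
    stk st (l1 ++ l2) = stk (stk st l1) l2 := by
  induction l1 generalizing st with
  | nil => simp
  | cons a r ih => cases a <;> simp [ih]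

lemma stk_pair {s : ℕ} {p q : List (MStep s)} (h : IncPair s p q) (st : List (Fin s)) :
    stk st p = stk st q := by
  cases h <;> simp

lemma aux_pair {s : ℕ} {p q : List (MStep s)} (h : IncPair s p q) (st : List (Fin s))
    (b : List (MStep s)) : isMotzkinAux st (p ++ b) ↔ isMotzkinAux st (q ++ b) := by
  cases h with
  | upFlat c => simp [aux_up, aux_flat]
  | downFlat c =>
    cases st with
    | nil => simp [aux_down_nil, aux_flat]
    | cons c' st' => simp [aux_down_cons, aux_flat]
  | peak c => simp [aux_up, aux_flat, aux_down_cons]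

lemma aux_move {s : ℕ} {p q : List (MStep s)} (h : IncPair s p q) (a b : List (MStep s))
    (st : List (Fin s)) :
    isMotzkinAux st (a ++ p ++ b) ↔ isMotzkinAux st (a ++ q ++ b) := by
  induction a generalizing st with
  | nil => simpa using aux_pair h st b
  | cons x r ih =>
    cases x with
    | up c => simp only [List.cons_append, aux_up]; exact ih (c :: st)
    | flat => simp only [List.cons_append, aux_flat]; exact ih st
    | down c =>
      cases st with
      | nil => simp only [List.cons_append, aux_down_nil]
      | cons c' st' => simp only [List.cons_append, aux_down_cons]; rw [ih st']

lemma motzkin_localMove {s : ℕ} {x y : List (MStep s)} (h : LocalMove x y) :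
    isMotzkin x ↔ isMotzkin y := by
  obtain ⟨a, b, p, q, hpq | hpq, hx, hy⟩ := h
  · rw [hx, hy]; exact aux_move hpq a b []
  · rw [hx, hy]; exact (aux_move hpq a b []).symm

/-- prefix of a valid path is processed validly -/
lemma aux_prefix {s : ℕ} (a l : List (MStep s)) (st : List (Fin s))
    (h : isMotzkinAux st (a ++ l)) : isMotzkinAux (stk st a) l := by
  induction a generalizing st with
  | nil => simpa using h
  | cons x r ih =>
    cases x with
    | up c => rw [List.cons_append, aux_up] at h; simpa using ih (c :: st) h
    | flat => rw [List.cons_append, aux_flat] at h; simpa using ih st h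
    | down c =>
      cases st with
      | nil => rw [List.cons_append, aux_down_nil] at h; exact h.elim
      | cons c' st' => rw [List.cons_append, aux_down_cons] at h; simpa using ih st' h.2

lemma stk_len {s : ℕ} (x : List (MStep s)) : ∀ (st : List (Fin s)), isMotzkinAux st x →
    ∀ (j : ℕ), ((stk st (x.take j)).length : ℤ) = st.length + height x j := by
  induction x with
  | nil => intro st _ j; simp [height]
  | cons a r ih =>
    intro st hx j
    cases j with
    | zero => simp [height]
    | succ j' =>
      cases a with
      | up c =>
        rw [aux_up] at hx
        have := ih (c :: st) hx j'
        simp only [List.take_succ_cons, stk_up, height, List.map_cons, List.sum_cons]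
        simp only [height] at this
        rw [this, MStep.h]
        push_cast [List.length_cons]
        ring
      | flat =>
        rw [aux_flat] at hx
        have := ih st hx j'
        simp only [List.take_succ_cons, stk_flat, height, List.map_cons, List.sum_cons]
        simp only [height] at this
        rw [this, MStep.h]
        ring
      | down c =>
        cases st with
        | nil => rw [aux_down_nil] at hx; exact hx.elim
        | cons c' st' =>
          rw [aux_down_cons] at hx
          have := ih st' hx.2 j'
          simp only [List.take_succ_cons, stk_down, List.tail_cons, height, List.map_cons,
            List.sum_cons]
          simp only [height] at this
          rw [this, MStep.h]
          push_cast [List.length_cons]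
          ring

lemma height_eq_stk {s : ℕ} (x : List (MStep s)) (hx : isMotzkin x) (j : ℕ) :
    height x j = ((stk [] (x.take j)).length : ℤ) := by
  rw [stk_len x [] hx j]; simp

/-- the bottom of the stack is preserved while the stack stays nonempty -/
lemma stk_bottom {s : ℕ} (x : List (MStep s)) : ∀ (st : List (Fin s)) (c : Fin s),
    (∀ j ≤ x.length, stk (st ++ [c]) (x.take j) ≠ []) →
    ∃ st', stk (st ++ [c]) x = st' ++ [c] := by
  induction x with
  | nil => exact fun st c _ => ⟨st, rfl⟩
  | cons a r ih =>
    intro st c h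
    cases a with
    | up c' =>
      have key := ih (c' :: st) c (fun j hj => by
        have := h (j + 1) (by simpa using hj)
        simpa using this)
      simpa using key
    | flat =>
      have key := ih st c (fun j hj => by
        have := h (j + 1) (by simpa using hj)
        simpa using this)
      simpa using key
    | down c' =>
      cases st with
      | nil => exact absurd (h 1 (by simp)) (by simp)
      | cons c'' st'' =>
        have key := ih st'' c (fun j hj => by
          have := h (j + 1) (by simpa using hj)
          simpa using this)
        simpa using key

/-- For a prime path starting with `up i`, the bottom of the stack at time n is i. -/
lemma prime_bottom {s n : ℕ} (x : List (MStep s)) (i : Fin s)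
    (hx : isMotzkin x)
    (hpos : ∀ q, 0 < q → q < 2 * n → 0 < height x q)
    (hhead : x.head? = some (MStep.up i)) (hn : 1 ≤ n) :
    (stk [] (x.take n)).getLast? = some i := by
  obtain ⟨r, rfl⟩ : ∃ r, x = MStep.up i :: r := by
    cases x with
    | nil => simp at hhead
    | cons a r =>
      simp only [List.head?_cons, Option.some.injEq] at hhead
      exact ⟨r, by rw [hhead]⟩
  obtain ⟨n', rfl⟩ : ∃ n', n = n' + 1 := ⟨n - 1, (Nat.succ_pred_eq_of_pos hn).symm⟩
  rw [List.take_succ_cons, stk_up]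
  have key : ∀ j ≤ (r.take n').length, stk ([] ++ [i]) ((r.take n').take j) ≠ [] := by
    intro j hj
    have hjn : j ≤ n' := le_trans hj (by simp)
    rw [List.take_take, min_eq_left hjn]
    have hpos' : 0 < height (MStep.up i :: r) (j + 1) :=
      hpos (j + 1) (Nat.succ_pos _) (by omega)
    rw [height_eq_stk _ hx (j + 1), List.take_succ_cons, stk_up] at hpos'
    intro hemp
    rw [show ([] ++ [i] : List (Fin s)) = [i] from rfl] at hemp
    rw [hemp] at hpos'
    simp at hpos'
  obtain ⟨st', hst'⟩ := stk_bottom (r.take n') [] i key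
  rw [show ([i] : List (Fin s)) = [] ++ [i] from rfl, hst', List.getLast?_concat]

/-- Key lemma: one increasing move either preserves the bottom color of the
stack at time `n`, or the resulting path is in the bottleneck. -/
lemma move_key {s : ℕ} (n : ℕ) {a b p q : List (MStep s)} (hpq : IncPair s p q)
    (hx : isMotzkin (a ++ p ++ b)) :
    (stk [] ((a ++ p ++ b).take n)).getLast? = (stk [] ((a ++ q ++ b).take n)).getLast?
    ∨ (a ++ q ++ b) ∈ bottleneck s n := by
  have hy : isMotzkin (a ++ q ++ b) := (aux_move hpq a b []).mp hx
  have hp2 : p.length = 2 := by cases hpq <;> rfl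
  have hq2 : q.length = 2 := by cases hpq <;> rfl
  rcases le_or_gt n a.length with hcase | hcase
  · -- move entirely after time n
    left
    rw [List.append_assoc, List.append_assoc,
      List.take_append_of_le_length hcase, List.take_append_of_le_length hcase]
  rcases le_or_gt (a.length + 2) n with hcase2 | hcase2
  · -- move entirely before time n
    left
    obtain ⟨t, rfl⟩ : ∃ t, n = a.length + 2 + t := ⟨n - (a.length + 2), by omega⟩
    rw [List.append_assoc, List.append_assoc,
      show a.length + 2 + t = a.length + (2 + t) by ring,
      List.take_length_add_append, List.take_length_add_append,
      show (2 : ℕ) + t = p.length + t by rw [hp2],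
      List.take_length_add_append,
      show p.length + t = q.length + t by rw [hp2, hq2],
      List.take_length_add_append,
      ← List.append_assoc, ← List.append_assoc,
      stk_append, stk_append, stk_append, stk_append, stk_pair hpq]
  -- straddling case: n = a.length + 1
  have hn : n = a.length + 1 := by omega
  have hL : (a ++ p ++ b).take n = a ++ p.take 1 := by
    rw [List.append_assoc, hn, show a.length + 1 = a.length + 1 from rfl, List.take_length_add_append,
      List.take_append_of_le_length (by omega)]
  have hR : (a ++ q ++ b).take n = a ++ q.take 1 := by
    rw [List.append_assoc, hn, List.take_length_add_append, List.take_append_of_le_length (by omega)]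
  have htakeA : (a ++ q ++ b).take a.length = a := by
    rw [List.append_assoc, List.take_append_of_le_length le_rfl, List.take_length]
  have hgetA : ∀ t : ℕ, (a ++ q ++ b)[a.length + t]? = (q ++ b)[t]? := by
    intro t
    rw [List.append_assoc, List.getElem?_append_right (Nat.le_add_right _ _)]
    simp
  have hSaux : isMotzkinAux (stk [] a) (p ++ b) := by
    apply aux_prefix
    rw [← List.append_assoc]
    exact hx
  cases hpq with
  | upFlat c =>
    rw [hL, hR, stk_append, stk_append]
    rcases hstk : stk [] a with _ | ⟨d, S'⟩
    · right
      left
      refine ⟨c, ?_, ?_⟩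
      · rw [hn, Nat.add_sub_cancel, show a.length = a.length + 0 from rfl, hgetA]
        simp
      · rw [hn, Nat.add_sub_cancel, height_eq_stk _ hy, htakeA, hstk]
        simp
    · left
      simp [List.getLast?_cons_cons]
  | peak c =>
    rw [hL, hR, stk_append, stk_append]
    rcases hstk : stk [] a with _ | ⟨d, S'⟩
    · right
      left
      refine ⟨c, ?_, ?_⟩
      · rw [hn, Nat.add_sub_cancel, show a.length = a.length + 0 from rfl, hgetA]
        simp
      · rw [hn, Nat.add_sub_cancel, height_eq_stk _ hy, htakeA, hstk]
        simp
    · left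
      simp [List.getLast?_cons_cons]
  | downFlat c =>
    rw [hL, hR, stk_append, stk_append]
    rcases hstk : stk [] a with _ | ⟨c0, S'⟩
    · rw [hstk, List.cons_append, aux_down_nil] at hSaux
      exact hSaux.elim
    · rcases S' with _ | ⟨d, S''⟩
      · right
        right
        refine ⟨c, ?_, ?_⟩
        · rw [hn, hgetA 1]
          simp
        · rw [hn, show a.length + 1 + 1 = a.length + 2 from rfl,
            height_eq_stk _ hy, List.append_assoc, List.take_length_add_append,
            show (2 : ℕ) = [MStep.flat, MStep.down c].length from rfl,
            List.take_left, stk_append, hstk]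
          simp
      · left
        simp [List.getLast?_cons_cons]

/-- Any sequence of local moves from a prime path of length 2n whose first
step has color i to a prime path whose first step has color j ≠ i must pass
through the bottleneck B. -/
theorem stmt15 (s n : ℕ) (w : ℕ → List (MStep s)) (k : ℕ)
    (hmoves : ∀ m < k, LocalMove (w m) (w (m + 1)))
    (i j : Fin s) (hij : i ≠ j)
    (h0 : isMotzkin (w 0) ∧ (w 0).length = 2 * n ∧
      (∀ q, 0 < q → q < 2 * n → 0 < height (w 0) q) ∧
      (w 0).head? = some (MStep.up i))
    (hk : isMotzkin (w k) ∧ (w k).length = 2 * n ∧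
      (∀ q, 0 < q → q < 2 * n → 0 < height (w k) q) ∧
      (w k).head? = some (MStep.up j)) :
    ∃ m ≤ k, w m ∈ bottleneck s n := by
  obtain ⟨h0m, h0len, h0pos, h0head⟩ := h0
  obtain ⟨hkm, hklen, hkpos, hkhead⟩ := hk
  rcases Nat.eq_zero_or_pos n with rfl | hn
  · exfalso
    have hlen0 : (w 0).length = 0 := by omega
    rw [List.length_eq_zero_iff] at hlen0
    rw [hlen0] at h0head
    simp at h0head
  have hmot : ∀ m, m ≤ k → isMotzkin (w m) := by
    intro m
    induction m with
    | zero => exact fun _ => h0m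
    | succ m' ih =>
      intro hm
      exact (motzkin_localMove (hmoves m' (by omega))).mp (ih (by omega))
  by_contra hB
  push_neg at hB
  have key : ∀ m, m < k →
      (stk [] ((w m).take n)).getLast? = (stk [] ((w (m + 1)).take n)).getLast? := by
    intro m hm
    obtain ⟨a, b, p, q, hpq | hpq, hx, hy⟩ := hmoves m hm
    · rcases move_key n hpq (by rw [← hx]; exact hmot m hm.le) with h | h
      · rw [hx, hy]; exact h
      · exact absurd (by rw [hy]; exact h) (hB (m + 1) hm)
    · rcases move_key n hpq (by rw [← hy]; exact hmot (m + 1) hm) with h | h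
      · rw [hx, hy]; exact h.symm
      · exact absurd (by rw [hx]; exact h) (hB m hm.le)
  have const : ∀ m, m ≤ k →
      (stk [] ((w m).take n)).getLast? = (stk [] ((w 0).take n)).getLast? := by
    intro m
    induction m with
    | zero => exact fun _ => rfl
    | succ m' ih =>
      intro hm
      rw [← key m' (by omega), ih (by omega)]
  have h1 := prime_bottom (w 0) i h0m h0pos h0head hn
  have h2 := prime_bottom (w k) j hkm hkpos hkhead hn
  have hck := const k le_rfl
  rw [h1, h2] at hck
  exact hij (Option.some_injective _ hck).symm
end

section
/- Any two s-colored Motzkin paths of length 2n are connected by a finite sequence of local moves (0u^k <-> u^k 0, 0d^k <-> d^k 0, 00 <-> u^k d^k). In particular, every s-colored Motzkin path can be reduced to the all-flat path 00...0 by local moves. -/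
section Aux

variable {s : ℕ}

/-- Stack machine executing a list of steps. -/
def mrun {s : ℕ} : List (Fin s) → List (MStep s) → Option (List (Fin s))
  | st, [] => some st
  | st, (MStep.up c) :: r => mrun (c :: st) r
  | st, MStep.flat :: r => mrun st r
  | [], (MStep.down _) :: _ => none
  | (c :: st), (MStep.down c') :: r => if c = c' then mrun st r else none

lemma mrun_iff : ∀ (st : List (Fin s)) (x : List (MStep s)),
    isMotzkinAux st x ↔ mrun st x = some [] := by
  intro st x
  induction x generalizing st with
  | nil => simp [isMotzkinAux, mrun]
  | cons a r ih =>
    cases a with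
    | up c => simp [isMotzkinAux, mrun, ih]
    | flat => simp [isMotzkinAux, mrun, ih]
    | down c' =>
      cases st with
      | nil => simp [isMotzkinAux, mrun]
      | cons c st =>
        simp only [isMotzkinAux, mrun, ih]
        split <;> simp_all

lemma mrun_ext : ∀ (p : List (MStep s)) (a b st : List (Fin s)),
    mrun a p = some b → mrun (a ++ st) p = some (b ++ st) := by
  intro p
  induction p with
  | nil => intro a b st h; simp [mrun] at h ⊢; exact h
  | cons x r ih =>
    intro a b st h
    cases x with
    | up c =>
      simp only [mrun] at h ⊢
      exact ih (c :: a) b st h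
    | flat =>
      simp only [mrun] at h ⊢
      exact ih a b st h
    | down c' =>
      cases a with
      | nil => simp [mrun] at h
      | cons c a =>
        simp only [List.cons_append, mrun] at h ⊢
        split at h
        · rename_i hc
          rw [if_pos hc]
          exact ih a b st h
        · exact absurd h (by simp)

lemma mrun_append : ∀ (p : List (MStep s)) (st : List (Fin s)) (q : List (MStep s)),
    mrun st (p ++ q) = (mrun st p).bind (fun t => mrun t q) := by
  intro p
  induction p with
  | nil => intro st q; simp [mrun]
  | cons x r ih =>
    intro st q
    cases x with
    | up c => simpa [mrun] using ih (c :: st) q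
    | flat => simpa [mrun] using ih st q
    | down c' =>
      cases st with
      | nil => simp [mrun]
      | cons c st =>
        simp only [List.cons_append, mrun]
        split
        · exact ih st q
        · simp

/-- Decomposition: if the machine starting with stack `c :: st` empties the
stack, the list splits at the matching down step. -/
lemma mrun_decomp : ∀ (N : ℕ) (l : List (MStep s)) (c : Fin s) (st : List (Fin s)),
    l.length ≤ N → mrun (c :: st) l = some [] →
    ∃ p q, mrun ([] : List (Fin s)) p = some [] ∧ mrun st q = some [] ∧
      l = p ++ MStep.down c :: q := by
  intro N
  induction N with
  | zero =>
    intro l c st hlen h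
    have hl : l = [] := List.eq_nil_of_length_eq_zero (by omega)
    subst hl; simp [mrun] at h
  | succ N ih =>
    intro l c st hlen h
    cases l with
    | nil => simp [mrun] at h
    | cons a r =>
      simp only [List.length_cons, Nat.succ_le_succ_iff] at hlen
      cases a with
      | flat =>
        obtain ⟨p, q, hp, hq, hr⟩ := ih r c st hlen h
        exact ⟨MStep.flat :: p, q, hp, hq, by simp [hr]⟩
      | down c'' =>
        simp only [mrun] at h
        split at h
        · rename_i hc
          subst hc
          exact ⟨[], r, rfl, h, rfl⟩
        · exact absurd h (by simp)
      | up c' =>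
        simp only [mrun] at h
        obtain ⟨p, q, hp, hq, hr⟩ := ih r c' (c :: st) hlen h
        have hqlen : q.length ≤ N := by
          have : r.length = p.length + 1 + q.length := by simp [hr]; omega
          omega
        obtain ⟨p2, q2, hp2, hq2, hq'⟩ := ih q c st hqlen hq
        refine ⟨MStep.up c' :: p ++ MStep.down c' :: p2, q2, ?_, hq2, ?_⟩
        · show mrun ([c'] : List (Fin s)) (p ++ MStep.down c' :: p2) = some []
          rw [mrun_append]
          have : mrun ([c'] : List (Fin s)) p = some [c'] :=
            mrun_ext p [] [] [c'] hp
          rw [this]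
          show mrun ([c'] : List (Fin s)) (MStep.down c' :: p2) = some []
          simpa [mrun] using hp2
        · simp [hr, hq']

lemma localMove_symm {x y : List (MStep s)} (h : LocalMove x y) : LocalMove y x := by
  obtain ⟨a, b, p, q, hpq, hx, hy⟩ := h
  exact ⟨a, b, q, p, hpq.symm, hy, hx⟩

lemma rtg_symm {x y : List (MStep s)}
    (h : Relation.ReflTransGen LocalMove x y) :
    Relation.ReflTransGen LocalMove y x := by
  induction h with
  | refl => exact .refl
  | tail _ hbc ih => exact .trans (.single (localMove_symm hbc)) ih

lemma localMove_lift (a b : List (MStep s)) {x y : List (MStep s)}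
    (h : LocalMove x y) : LocalMove (a ++ x ++ b) (a ++ y ++ b) := by
  obtain ⟨a', b', p, q, hpq, hx, hy⟩ := h
  exact ⟨a ++ a', b' ++ b, p, q, hpq, by simp [hx], by simp [hy]⟩

lemma rtg_lift (a b : List (MStep s)) {x y : List (MStep s)}
    (h : Relation.ReflTransGen LocalMove x y) :
    Relation.ReflTransGen LocalMove (a ++ x ++ b) (a ++ y ++ b) := by
  induction h with
  | refl => exact .refl
  | tail _ hbc ih => exact .tail ih (localMove_lift a b hbc)

/-- Move an up step rightwards across flats. -/
lemma up_cross_flats (c : Fin s) : ∀ (k : ℕ) (r : List (MStep s)),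
    Relation.ReflTransGen LocalMove
      (MStep.up c :: (List.replicate k MStep.flat ++ r))
      (List.replicate k MStep.flat ++ MStep.up c :: r) := by
  intro k
  induction k with
  | zero => intro r; exact .refl
  | succ k ih =>
    intro r
    have step : LocalMove
        (MStep.up c :: (List.replicate (k+1) MStep.flat ++ r))
        (MStep.flat :: MStep.up c :: (List.replicate k MStep.flat ++ r)) :=
      ⟨[], List.replicate k MStep.flat ++ r, [MStep.up c, MStep.flat],
        [MStep.flat, MStep.up c], Or.inr (IncPair.upFlat c),
        by simp [List.replicate_succ], by simp⟩
    refine .trans (.single step) ?_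
    have := rtg_lift [MStep.flat] [] (ih r)
    simpa [List.replicate_succ] using this

/-- Every Motzkin path reduces to the all-flat path of the same length. -/
lemma reduce_to_flat : ∀ (N : ℕ) (x : List (MStep s)), x.length ≤ N →
    isMotzkin x →
    Relation.ReflTransGen LocalMove x (List.replicate x.length MStep.flat) := by
  intro N
  induction N with
  | zero =>
    intro x hlen _
    have hl : x = [] := List.eq_nil_of_length_eq_zero (by omega)
    subst hl; exact .refl
  | succ N ih =>
    intro x hlen hx
    cases x with
    | nil => exact .refl
    | cons a r =>
      simp only [List.length_cons, Nat.succ_le_succ_iff] at hlen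
      cases a with
      | flat =>
        have hr : isMotzkin r := hx
        have := rtg_lift [MStep.flat] [] (ih r hlen hr)
        simpa [List.replicate_succ] using this
      | down c => exact absurd hx (by simp [isMotzkin, isMotzkinAux])
      | up c =>
        have hx' : mrun ([c] : List (Fin s)) r = some [] := by
          have := (mrun_iff [] (MStep.up c :: r)).mp hx
          simpa [mrun] using this
        obtain ⟨p, q, hp, hq, hr⟩ := mrun_decomp r.length r c [] le_rfl hx'
        have hqlen : q.length ≤ N := by
          have : r.length = p.length + 1 + q.length := by simp [hr]; omega
          omega
        have hplen : p.length ≤ N := by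
          have : r.length = p.length + 1 + q.length := by simp [hr]; omega
          omega
        have hpM : isMotzkin p := (mrun_iff [] p).mpr hp
        have hqM : isMotzkin q := (mrun_iff [] q).mpr hq
        have red_p := ih p hplen hpM
        have red_q := ih q hqlen hqM
        -- x = up c :: p ++ down c :: q
        have step1 : Relation.ReflTransGen LocalMove
            (MStep.up c :: r)
            (MStep.up c :: (List.replicate p.length MStep.flat ++
              MStep.down c :: List.replicate q.length MStep.flat)) := by
          have h1 := rtg_lift [MStep.up c] (MStep.down c :: q) red_p
          have h2 := rtg_lift (MStep.up c :: List.replicate p.length MStep.flat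
            ++ [MStep.down c]) [] red_q
          rw [hr]
          exact .trans (by simpa using h1) (by simpa using h2)
        have step2 : Relation.ReflTransGen LocalMove
            (MStep.up c :: (List.replicate p.length MStep.flat ++
              MStep.down c :: List.replicate q.length MStep.flat))
            (List.replicate p.length MStep.flat ++ MStep.up c ::
              MStep.down c :: List.replicate q.length MStep.flat) :=
          up_cross_flats c p.length _
        have step3 : LocalMove
            (List.replicate p.length MStep.flat ++ MStep.up c ::
              MStep.down c :: List.replicate q.length MStep.flat)
            (List.replicate p.length MStep.flat ++ MStep.flat ::
              MStep.flat :: List.replicate q.length MStep.flat) :=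
          ⟨List.replicate p.length MStep.flat, List.replicate q.length MStep.flat,
            [MStep.up c, MStep.down c], [MStep.flat, MStep.flat],
            Or.inr (IncPair.peak c), by simp, by simp⟩
        have hfinal : List.replicate p.length MStep.flat ++ MStep.flat ::
            MStep.flat :: List.replicate q.length MStep.flat
            = List.replicate (MStep.up c :: r).length (MStep.flat : MStep s) := by
          have : r.length = p.length + 1 + q.length := by simp [hr]; omega
          simp only [List.length_cons, this]
          rw [show p.length + 1 + q.length + 1 = p.length + (q.length + 2) by omega,
            List.replicate_add]
          simp [List.replicate_succ]
        rw [← hfinal]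
        exact .trans step1 (.trans step2 (.single step3))

end Aux

/-- Any two s-colored Motzkin paths of length 2n are connected by a finite
sequence of local moves; in particular every such path can be reduced to the
all-flat path. -/
theorem stmt16 (s n : ℕ) (x y : List (MStep s))
    (hx : isMotzkin x) (hxlen : x.length = 2 * n)
    (hy : isMotzkin y) (hylen : y.length = 2 * n) :
    Relation.ReflTransGen LocalMove x y ∧
    Relation.ReflTransGen LocalMove x (List.replicate (2 * n) MStep.flat) := by
  have hxr := reduce_to_flat x.length x le_rfl hx
  have hyr := reduce_to_flat y.length y le_rfl hy
  rw [hxlen] at hxr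
  rw [hylen] at hyr
  exact ⟨.trans hxr (rtg_symm hyr), hxr⟩
end

section
/- Let P be a reversible irreducible Markov chain with stationary distribution pi on a finite set Omega, and suppose there exist disjoint sets S, S', B in Omega and an involution x -> x' on Omega preserving pi, mapping S to S' and B to B, such that every path of positive-probability transitions from S to S' passes through B. Let A be the set of states reachable from S without entering B. Then pi(A) <= 1/2 and 1 - lambda_2(P) <= 2*pi(B)/pi(S). -/
open Matrix Finset

section stmt19aux
variable {Ω : Type*} [Fintype Ω] [DecidableEq Ω]




lemma pow_entry_nonneg (P : Matrix Ω Ω ℝ) (hnn : ∀ x y, 0 ≤ P x y) :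
    ∀ k x y, 0 ≤ (P ^ k) x y := by
  intro k
  induction k with
  | zero => intro x y; by_cases h : x = y <;> simp [pow_zero, Matrix.one_apply, h]
  | succ n ih =>
      intro x y
      rw [pow_succ, Matrix.mul_apply]
      exact Finset.sum_nonneg fun z _ => mul_nonneg (ih x z) (hnn z y)

lemma pow_row_sum (P : Matrix Ω Ω ℝ) (hrow : ∀ x, ∑ y, P x y = 1) :
    ∀ k x, ∑ y, (P ^ k) x y = 1 := by
  intro k
  induction k with
  | zero => intro x; simp [pow_zero, Matrix.one_apply]
  | succ n ih =>
      intro x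
      simp only [pow_succ, Matrix.mul_apply]
      rw [Finset.sum_comm]
      calc ∑ z, ∑ y, (P ^ n) x z * P z y = ∑ z, (P ^ n) x z * ∑ y, P z y := by
            simp [Finset.mul_sum]
        _ = 1 := by simp [hrow, ih]

lemma pow_mulVec_fixed (P : Matrix Ω Ω ℝ) (h : Ω → ℝ) (hfix : P.mulVec h = h) :
    ∀ k, (P ^ k).mulVec h = h := by
  intro k
  induction k with
  | zero => simp [pow_zero, Matrix.one_mulVec]
  | succ n ih => rw [pow_succ', ← Matrix.mulVec_mulVec, ih, hfix]

lemma max_principle (P : Matrix Ω Ω ℝ) (hnn : ∀ x y, 0 ≤ P x y)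
    (hrow : ∀ x, ∑ y, P x y = 1) (hirr : ∀ x y, ∃ k : ℕ, 0 < (P ^ k) x y)
    (h : Ω → ℝ) (hfix : P.mulVec h = h) : ∀ x y, h x = h y := by
  intro x y
  -- take the maximizer
  obtain ⟨x₀, -, hx₀⟩ := Finset.exists_max_image Finset.univ h ⟨x, Finset.mem_univ x⟩
  -- it suffices to show everything equals h x₀
  suffices hkey : ∀ z, h z = h x₀ by rw [hkey x, hkey y]
  intro z
  obtain ⟨k, hk⟩ := hirr x₀ z
  have hfixk := pow_mulVec_fixed P h hfix k
  have hval : (P ^ k).mulVec h x₀ = h x₀ := by rw [hfixk]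
  have hsum : ∑ w, (P ^ k) x₀ w * (h x₀ - h w) = 0 := by
    have : ∑ w, (P ^ k) x₀ w * h w = h x₀ := hval
    calc ∑ w, (P ^ k) x₀ w * (h x₀ - h w)
        = (∑ w, (P ^ k) x₀ w) * h x₀ - ∑ w, (P ^ k) x₀ w * h w := by
          rw [Finset.sum_mul, ← Finset.sum_sub_distrib]; exact Finset.sum_congr rfl fun w _ => by ring
      _ = 0 := by rw [pow_row_sum P hrow, this]; ring
  have hterm : ∀ w ∈ Finset.univ, 0 ≤ (P ^ k) x₀ w * (h x₀ - h w) := fun w _ =>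
    mul_nonneg (pow_entry_nonneg P hnn k x₀ w) (sub_nonneg.mpr (hx₀ w (Finset.mem_univ w)))
  have := (Finset.sum_eq_zero_iff_of_nonneg hterm).mp hsum z (Finset.mem_univ z)
  rcases mul_eq_zero.mp this with h1 | h2
  · exact absurd h1 (ne_of_gt hk)
  · linarith [sub_eq_zero.mp h2]



lemma algebraMap_sub_mulVec (P : Matrix Ω Ω ℝ) (μ : ℝ) (v : Ω → ℝ) :
    (algebraMap ℝ (Matrix Ω Ω ℝ) μ - P).mulVec v = μ • v - P.mulVec v := by
  rw [Matrix.sub_mulVec, Algebra.algebraMap_eq_smul_one, Matrix.smul_mulVec,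
    Matrix.one_mulVec]

lemma spec_to_eigen (P : Matrix Ω Ω ℝ) {μ : ℝ} (hμ : μ ∈ spectrum ℝ P) :
    ∃ h : Ω → ℝ, h ≠ 0 ∧ P.mulVec h = μ • h := by
  rw [spectrum.mem_iff] at hμ
  have hdet : (algebraMap ℝ (Matrix Ω Ω ℝ) μ - P).det = 0 := by
    by_contra hne
    exact hμ ((Matrix.isUnit_iff_isUnit_det _).mpr (isUnit_iff_ne_zero.mpr hne))
  obtain ⟨v, hv0, hv⟩ := (Matrix.exists_mulVec_eq_zero_iff).mpr hdet
  refine ⟨v, hv0, ?_⟩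
  rw [algebraMap_sub_mulVec] at hv
  linear_combination (norm := module) -hv

lemma eigen_to_spec (P : Matrix Ω Ω ℝ) {μ : ℝ} {h : Ω → ℝ} (h0 : h ≠ 0)
    (heig : P.mulVec h = μ • h) : μ ∈ spectrum ℝ P := by
  rw [spectrum.mem_iff]
  intro hu
  have hdet := (Matrix.isUnit_iff_isUnit_det _).mp hu
  have : ∃ v, v ≠ 0 ∧ (algebraMap ℝ (Matrix Ω Ω ℝ) μ - P).mulVec v = 0 := by
    refine ⟨h, h0, ?_⟩
    rw [algebraMap_sub_mulVec, heig, sub_self]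
  rw [Matrix.exists_mulVec_eq_zero_iff] at this
  rw [this] at hdet
  exact (not_isUnit_zero : ¬ IsUnit (0:ℝ)) hdet

lemma spec_le_one (P : Matrix Ω Ω ℝ) (hnn : ∀ x y, 0 ≤ P x y)
    (hrow : ∀ x, ∑ y, P x y = 1) : ∀ μ ∈ spectrum ℝ P, μ ≤ 1 := by
  intro μ hμ
  obtain ⟨h, h0, heig⟩ := spec_to_eigen P hμ
  obtain ⟨x₁, hx₁⟩ : ∃ x, h x ≠ 0 := by
    by_contra hc; push_neg at hc; exact h0 (funext fun x => hc x)
  obtain ⟨x₀, -, hx₀⟩ := Finset.exists_max_image Finset.univ (fun x => |h x|)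
    ⟨x₁, Finset.mem_univ x₁⟩
  have hpos : 0 < |h x₀| := lt_of_lt_of_le (abs_pos.mpr hx₁) (hx₀ x₁ (Finset.mem_univ x₁))
  have hval : μ * h x₀ = ∑ y, P x₀ y * h y := by
    have := congrFun heig x₀
    simp only [Matrix.mulVec, dotProduct, Pi.smul_apply, smul_eq_mul] at this
    linarith [this]
  have habs : |μ| * |h x₀| ≤ |h x₀| := by
    calc |μ| * |h x₀| = |μ * h x₀| := (abs_mul μ (h x₀)).symm
      _ = |∑ y, P x₀ y * h y| := by rw [hval]
      _ ≤ ∑ y, |P x₀ y * h y| := Finset.abs_sum_le_sum_abs _ _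
      _ ≤ ∑ y, P x₀ y * |h x₀| := by
          refine Finset.sum_le_sum fun y _ => ?_
          rw [abs_mul, abs_of_nonneg (hnn x₀ y)]
          exact mul_le_mul_of_nonneg_left (hx₀ y (Finset.mem_univ y)) (hnn x₀ y)
      _ = |h x₀| := by rw [← Finset.sum_mul, hrow, one_mul]
  have : |μ| ≤ 1 := by
    by_contra hgt
    push_neg at hgt
    nlinarith
  linarith [le_abs_self μ, this]



lemma rev_pow (P : Matrix Ω Ω ℝ) (π : Ω → ℝ)
    (hrev : ∀ x y, π x * P x y = π y * P y x) :
    ∀ k x y, π x * (P ^ k) x y = π y * (P ^ k) y x := by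
  intro k
  induction k with
  | zero =>
      intro x y
      by_cases h : x = y
      · subst h; rfl
      · simp [pow_zero, Matrix.one_apply, h, Ne.symm h]
  | succ n ih =>
      intro x y
      have hcomm : P ^ n * P = P * P ^ n := by rw [← pow_succ, ← pow_succ']
      rw [pow_succ]
      conv_rhs => rw [hcomm]
      simp only [Matrix.mul_apply, Finset.mul_sum]
      apply Finset.sum_congr rfl
      intro z _
      calc π x * ((P ^ n) x z * P z y) = (π x * (P ^ n) x z) * P z y := by ring
        _ = (π z * (P ^ n) z x) * P z y := by rw [ih]
        _ = (π z * P z y) * (P ^ n) z x := by ring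
        _ = (π y * P y z) * (P ^ n) z x := by rw [hrev]
        _ = π y * (P y z * (P ^ n) z x) := by ring

lemma pi_pos (P : Matrix Ω Ω ℝ) (π : Ω → ℝ) (hπ0 : ∀ x, 0 ≤ π x)
    (hπ1 : ∑ x, π x = 1) (hrev : ∀ x y, π x * P x y = π y * P y x)
    (hirr : ∀ x y, ∃ k : ℕ, 0 < (P ^ k) x y) : ∀ x, 0 < π x := by
  obtain ⟨x₀, -, hx₀⟩ : ∃ x ∈ Finset.univ, 0 < π x := by
    by_contra hc
    push_neg at hc
    have : ∑ x, π x = 0 := le_antisymm (Finset.sum_nonpos fun x hx => hc x hx)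
      (Finset.sum_nonneg fun x _ => hπ0 x)
    rw [hπ1] at this; norm_num at this
  intro y
  obtain ⟨k, hk⟩ := hirr x₀ y
  have := rev_pow P π hrev k x₀ y
  have hpos : 0 < π y * (P ^ k) y x₀ := by rw [← this]; positivity
  rcases lt_or_eq_of_le (hπ0 y) with h | h
  · exact h
  · exfalso; rw [← h] at hpos; simp at hpos

lemma second_eigenvalue_bound (P : Matrix Ω Ω ℝ) (hnn : ∀ x y, 0 ≤ P x y)
    (hrow : ∀ x, ∑ y, P x y = 1)
    (π : Ω → ℝ) (hπpos : ∀ x, 0 < π x) (hπ1 : ∑ x, π x = 1)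
    (hrev : ∀ x y, π x * P x y = π y * P y x)
    (hirr : ∀ x y, ∃ k : ℕ, 0 < (P ^ k) x y)
    (g : Ω → ℝ) (hg0 : g ≠ 0) (hgmean : ∑ x, π x * g x = 0) :
    ∃ lam, lam ∈ spectrum ℝ P ∧ lam ≠ 1 ∧
      ∑ x, ∑ y, π x * P x y * g x * g y ≤ lam * ∑ x, π x * g x ^ 2 := by
  classical
  have hΩ : Nonempty Ω := by
    by_contra hempty
    rw [not_nonempty_iff] at hempty
    rw [Finset.univ_eq_empty, Finset.sum_empty] at hπ1
    norm_num at hπ1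
  have hsqpos : ∀ x, 0 < Real.sqrt (π x) := fun x => Real.sqrt_pos.mpr (hπpos x)
  have hsm : ∀ x, Real.sqrt (π x) * Real.sqrt (π x) = π x :=
    fun x => Real.mul_self_sqrt (hπpos x).le
  -- the symmetrized matrix
  set M : Matrix Ω Ω ℝ :=
    Matrix.of (fun x y => Real.sqrt (π x) * P x y * (Real.sqrt (π y))⁻¹) with hMdef
  have hMapp : ∀ x y, M x y = Real.sqrt (π x) * P x y * (Real.sqrt (π y))⁻¹ :=
    fun x y => rfl
  have hMsymm : ∀ x y, M x y = M y x := by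
    intro x y
    rw [hMapp, hMapp]
    have h1 := hsm x; have h2 := hsm y
    have h3 := (hsqpos x).ne'; have h4 := (hsqpos y).ne'
    field_simp
    linear_combination hrev x y + P x y * h1 - P y x * h2
  have hM : M.IsHermitian := by
    unfold Matrix.IsHermitian
    ext x y
    rw [Matrix.conjTranspose_apply]
    simp only [star_trivial]
    exact hMsymm y x
  -- the linear map on Euclidean space
  set Mlin := Matrix.toEuclideanLin M with hMlindef
  have hMlin_apply : ∀ (w : EuclideanSpace ℝ Ω) (x : Ω),
      Mlin w x = ∑ y, M x y * w y := by
    intro w x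
    simp [hMlindef, Matrix.toEuclideanLin_apply, Matrix.mulVec, dotProduct]
  have hMsymL : LinearMap.IsSymmetric Mlin := Matrix.isHermitian_iff_isSymmetric.mp hM
  have hinner : ∀ (a b : EuclideanSpace ℝ Ω), (inner ℝ a b : ℝ) = ∑ x, a x * b x := by
    intro a b
    simp [PiLp.inner_apply]
    exact Finset.sum_congr rfl fun x _ => mul_comm _ _
  -- the Perron vector
  set u : EuclideanSpace ℝ Ω := WithLp.toLp 2 (fun x => Real.sqrt (π x)) with hudef
  have hMu : Mlin u = u := by
    ext x
    rw [hMlin_apply]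
    have : ∀ y, M x y * u y = Real.sqrt (π x) * P x y := by
      intro y
      rw [hMapp]
      have : (Real.sqrt (π y))⁻¹ * Real.sqrt (π y) = 1 :=
        inv_mul_cancel₀ (hsqpos y).ne'
      show Real.sqrt (π x) * P x y * (Real.sqrt (π y))⁻¹ * Real.sqrt (π y)
        = Real.sqrt (π x) * P x y
      rw [mul_assoc, this, mul_one]
    rw [Finset.sum_congr rfl (fun y _ => this y), ← Finset.mul_sum, hrow, mul_one]
  -- the test vector
  set v : EuclideanSpace ℝ Ω := WithLp.toLp 2 (fun x => Real.sqrt (π x) * g x) with hvdef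
  have hvW : v ∈ (ℝ ∙ u)ᗮ := by
    rw [Submodule.mem_orthogonal_singleton_iff_inner_right, hinner]
    calc ∑ x, u x * v x = ∑ x, π x * g x := by
          refine Finset.sum_congr rfl fun x _ => ?_
          show Real.sqrt (π x) * (Real.sqrt (π x) * g x) = π x * g x
          rw [← mul_assoc, hsm]
      _ = 0 := hgmean
  have hv0 : v ≠ 0 := by
    obtain ⟨x₁, hx₁⟩ : ∃ x, g x ≠ 0 := by
      by_contra hc; push_neg at hc; exact hg0 (funext fun x => hc x)
    intro hcon
    have : v x₁ = 0 := by rw [hcon]; rfl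
    have : Real.sqrt (π x₁) * g x₁ = 0 := this
    rcases mul_eq_zero.mp this with h | h
    · exact (hsqpos x₁).ne' h
    · exact hx₁ h
  -- restrict to the orthogonal complement of u
  have hWinv : ∀ z ∈ (ℝ ∙ u)ᗮ, Mlin z ∈ (ℝ ∙ u)ᗮ := by
    intro z hz
    rw [Submodule.mem_orthogonal_singleton_iff_inner_right] at hz ⊢
    calc (inner ℝ u (Mlin z) : ℝ) = inner ℝ (Mlin u) z := (hMsymL u z).symm
      _ = inner ℝ u z := by rw [hMu]
      _ = 0 := hz
  set W := (ℝ ∙ u)ᗮ with hWdef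
  set T : W →ₗ[ℝ] W := Mlin.restrict hWinv with hTdef
  have hTsym : T.IsSymmetric := by
    intro a b
    have : (inner ℝ (T a : W) b : ℝ) = inner ℝ (Mlin (a : EuclideanSpace ℝ Ω)) (b : EuclideanSpace ℝ Ω) := by
      rw [Submodule.coe_inner, LinearMap.restrict_coe_apply]
    rw [this, hMsymL, Submodule.coe_inner, LinearMap.restrict_coe_apply]
  haveI : Nontrivial W := nontrivial_of_ne ⟨v, hvW⟩ 0 (by
    simp only [ne_eq, Submodule.mk_eq_zero]; exact hv0)
  have hEig := hTsym.hasEigenvalue_iSup_of_finiteDimensional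
  set lam : ℝ := ⨆ x : { x : W // x ≠ 0 },
    RCLike.re (inner ℝ (T x) (x : W) : ℝ) / ‖(x : W)‖ ^ 2 with hlamdef
  have hEig' : Module.End.HasEigenvalue T lam := by
    convert hEig using 1
    all_goals rfl
  -- bound the Rayleigh quotient from below by the one of v
  have hray : (inner ℝ (Mlin v) v : ℝ) / ‖v‖ ^ 2 ≤ lam := by
    have hbdd : BddAbove (Set.range fun x : { x : W // x ≠ 0 } =>
        RCLike.re (inner ℝ (T x) (x : W) : ℝ) / ‖(x : W)‖ ^ 2) := by
      set Tc := LinearMap.toContinuousLinearMap T with hTc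
      refine ⟨‖Tc‖, ?_⟩
      rintro q ⟨z, rfl⟩
      have hz0 : ‖(z : W)‖ ≠ 0 := norm_ne_zero_iff.mpr z.2
      have hzpos : (0:ℝ) < ‖(z : W)‖ ^ 2 := by positivity
      show RCLike.re (inner ℝ (T (z : W)) ((z : W) : W) : ℝ) / ‖((z : W) : W)‖ ^ 2 ≤ ‖Tc‖
      rw [RCLike.re_to_real, div_le_iff₀ hzpos]
      calc (inner ℝ (T (z:W)) ((z:W)) : ℝ) ≤ ‖T (z : W)‖ * ‖(z : W)‖ := real_inner_le_norm _ _
        _ ≤ ‖Tc‖ * ‖(z : W)‖ * ‖(z : W)‖ := by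
            have h5 : ‖T (z : W)‖ ≤ ‖Tc‖ * ‖(z : W)‖ := Tc.le_opNorm (z : W)
            nlinarith [norm_nonneg ((z : W) : EuclideanSpace ℝ Ω), norm_nonneg (z : W),
              norm_nonneg Tc]
        _ = ‖Tc‖ * ‖(z : W)‖ ^ 2 := by ring
    have h1 := le_ciSup hbdd (⟨⟨v, hvW⟩, by
      simp only [ne_eq, Submodule.mk_eq_zero]; exact hv0⟩ : { x : W // x ≠ 0 })
    rw [← hlamdef] at h1
    refine le_trans (le_of_eq ?_) h1
    show (inner ℝ (Mlin v) v : ℝ) / ‖v‖ ^ 2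
      = RCLike.re (inner ℝ (T ⟨v, hvW⟩) ((⟨v, hvW⟩ : W) : W) : ℝ) / ‖((⟨v, hvW⟩ : W) : W)‖ ^ 2
    rw [RCLike.re_to_real, Submodule.coe_inner, LinearMap.restrict_coe_apply]
    rfl
  -- extract an eigenvector
  obtain ⟨wv, hwmem, hw0⟩ := hEig'.exists_hasEigenvector
  have hTwv : T wv = lam • wv := Module.End.mem_eigenspace_iff.mp hwmem
  have hMwv : Mlin (wv : EuclideanSpace ℝ Ω) = lam • (wv : EuclideanSpace ℝ Ω) := by
    have := congrArg (Subtype.val) hTwv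
    rw [LinearMap.restrict_coe_apply] at this
    rw [this]
    rfl
  -- transfer the eigenvector to P
  set h : Ω → ℝ := fun x => (wv : EuclideanSpace ℝ Ω) x * (Real.sqrt (π x))⁻¹ with hhdef
  have hwv_eq : ∀ x, (wv : EuclideanSpace ℝ Ω) x = h x * Real.sqrt (π x) := by
    intro x
    show (wv : EuclideanSpace ℝ Ω) x
      = (wv : EuclideanSpace ℝ Ω) x * (Real.sqrt (π x))⁻¹ * Real.sqrt (π x)
    rw [mul_assoc, inv_mul_cancel₀ (hsqpos x).ne', mul_one]
  have hPh : P.mulVec h = lam • h := by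
    funext x
    have h1 : Mlin (wv : EuclideanSpace ℝ Ω) x = lam * (wv : EuclideanSpace ℝ Ω) x := by
      rw [hMwv]; rfl
    rw [hMlin_apply] at h1
    have h2 : ∀ y, M x y * (wv : EuclideanSpace ℝ Ω) y
        = Real.sqrt (π x) * (P x y * h y) := by
      intro y
      rw [hMapp, hwv_eq y]
      have e : Real.sqrt (π x) * P x y * (Real.sqrt (π y))⁻¹ * (h y * Real.sqrt (π y))
          = Real.sqrt (π x) * (P x y * h y) * ((Real.sqrt (π y))⁻¹ * Real.sqrt (π y)) := by
        ring
      rw [e, inv_mul_cancel₀ (hsqpos y).ne', mul_one]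
    rw [Finset.sum_congr rfl (fun y _ => h2 y), ← Finset.mul_sum, hwv_eq x] at h1
    have h3 : Real.sqrt (π x) * (∑ y, P x y * h y)
        = Real.sqrt (π x) * (lam * h x) := by
      rw [h1]; ring
    have h5 := mul_left_cancel₀ (hsqpos x).ne' h3
    show ∑ y, P x y * h y = lam * h x
    exact h5
  have hh0 : h ≠ 0 := by
    intro hc
    apply hw0
    have : (wv : EuclideanSpace ℝ Ω) = 0 := by
      ext x
      rw [hwv_eq x, show h x = 0 from congrFun hc x, zero_mul]
      rfl
    exact Subtype.ext this
  have hspec : lam ∈ spectrum ℝ P := eigen_to_spec P hh0 hPh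
  have huu : (inner ℝ u u : ℝ) = 1 := by
    rw [hinner]
    calc ∑ x, u x * u x = ∑ x, π x := Finset.sum_congr rfl (fun x _ => hsm x)
      _ = 1 := hπ1
  have hlam1 : lam ≠ 1 := by
    intro hl
    rw [hl, one_smul] at hPh
    have hconst := max_principle P hnn hrow hirr h hPh
    obtain ⟨x₀⟩ := hΩ
    have hwvs : (wv : EuclideanSpace ℝ Ω) = (h x₀) • u := by
      ext x
      rw [hwv_eq x, hconst x x₀]
      show h x₀ * Real.sqrt (π x) = ((h x₀) • u) x
      rw [PiLp.smul_apply, smul_eq_mul]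
    have hperp : (wv : EuclideanSpace ℝ Ω) ∈ (ℝ ∙ u)ᗮ := wv.2
    rw [Submodule.mem_orthogonal_singleton_iff_inner_right] at hperp
    rw [hwvs, inner_smul_right, huu, mul_one] at hperp
    apply hw0
    apply Subtype.ext
    rw [hwvs, hperp, zero_smul]
    simp
  refine ⟨lam, hspec, hlam1, ?_⟩
  have hvnorm : ‖v‖ ^ 2 = ∑ x, π x * g x ^ 2 := by
    rw [← real_inner_self_eq_norm_sq, hinner]
    refine Finset.sum_congr rfl fun x _ => ?_
    calc (Real.sqrt (π x) * g x) * (Real.sqrt (π x) * g x)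
        = (Real.sqrt (π x) * Real.sqrt (π x)) * (g x * g x) := by ring
      _ = π x * g x ^ 2 := by rw [hsm x]; ring
  have hQ : (inner ℝ (Mlin v) v : ℝ) = ∑ x, ∑ y, π x * P x y * g x * g y := by
    rw [hinner]
    have hcoord : ∀ x, Mlin v x * v x = ∑ y, π x * P x y * g x * g y := by
      intro x
      rw [hMlin_apply, Finset.sum_mul]
      refine Finset.sum_congr rfl fun y _ => ?_
      rw [hMapp]
      show Real.sqrt (π x) * P x y * (Real.sqrt (π y))⁻¹ * (Real.sqrt (π y) * g y)
          * (Real.sqrt (π x) * g x) = π x * P x y * g x * g y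
      have e : Real.sqrt (π x) * P x y * (Real.sqrt (π y))⁻¹ * (Real.sqrt (π y) * g y)
          * (Real.sqrt (π x) * g x)
          = (Real.sqrt (π x) * Real.sqrt (π x)) * P x y * g x * g y
            * ((Real.sqrt (π y))⁻¹ * Real.sqrt (π y)) := by ring
      rw [e, hsm x, inv_mul_cancel₀ (hsqpos y).ne', mul_one]
    exact Finset.sum_congr rfl fun x _ => hcoord x
  have hvpos : (0:ℝ) < ‖v‖ ^ 2 := by
    have : ‖v‖ ≠ 0 := norm_ne_zero_iff.mpr hv0
    positivity
  rw [div_le_iff₀ hvpos] at hray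
  rw [← hQ, ← hvnorm]
  exact hray

end stmt19aux
/-- Bottleneck bound on the spectral gap: if a reversible irreducible chain
P has disjoint sets S, S', B and a π- and P-preserving involution mapping S
onto S' and B onto B, such that every positive-probability path from S to S'
passes through B, then for A the set of states reachable from S avoiding B
we have π(A) ≤ 1/2 and 1 - λ₂(P) ≤ 2π(B)/π(S). -/
theorem stmt19 {Ω : Type*} [Fintype Ω] [DecidableEq Ω]
    (P : Matrix Ω Ω ℝ) (hnn : ∀ x y, 0 ≤ P x y) (hrow : ∀ x, ∑ y, P x y = 1)
    (π : Ω → ℝ) (hπ0 : ∀ x, 0 ≤ π x) (hπ1 : ∑ x, π x = 1)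
    (hrev : ∀ x y, π x * P x y = π y * P y x)
    (hirr : ∀ x y, ∃ k : ℕ, 0 < (P ^ k) x y)
    (S S' B : Set Ω) (hSS' : Disjoint S S') (hSB : Disjoint S B)
    (hS'B : Disjoint S' B) (hSne : S.Nonempty)
    (σ : Ω → Ω) (hinv : ∀ x, σ (σ x) = x) (hπσ : ∀ x, π (σ x) = π x)
    (hPσ : ∀ x y, P (σ x) (σ y) = P x y)
    (hσS : σ '' S = S') (hσB : σ '' B = B)
    (hpass : ∀ (k : ℕ) (w : ℕ → Ω), w 0 ∈ S → w k ∈ S' →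
      (∀ i < k, 0 < P (w i) (w (i + 1))) → ∃ i ≤ k, w i ∈ B)
    (A : Set Ω)
    (hA : A = {x | ∃ (k : ℕ) (w : ℕ → Ω), w 0 ∈ S ∧ w k = x ∧
      (∀ i < k, 0 < P (w i) (w (i + 1))) ∧ ∀ i ≤ k, w i ∉ B}) :
    (∑ᶠ x ∈ A, π x) ≤ 1 / 2 ∧
    1 - sSup (spectrum ℝ P \ {1}) ≤
      2 * (∑ᶠ x ∈ B, π x) / (∑ᶠ x ∈ S, π x) := by
  classical
  have hπpos : ∀ x, 0 < π x := pi_pos P π hπ0 hπ1 hrev hirr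
  have hPsym : ∀ a b, 0 < P a b → 0 < P b a := by
    intro a b hab
    rcases lt_or_eq_of_le (hnn b a) with h | h
    · exact h
    · exfalso
      have := hrev a b
      rw [← h, mul_zero] at this
      nlinarith [hπpos a]
  have hσBmem : ∀ z, σ z ∈ B ↔ z ∈ B := by
    intro z
    constructor
    · intro hz
      have : σ (σ z) ∈ σ '' B := ⟨σ z, hz, rfl⟩
      rwa [hinv, hσB] at this
    · intro hz
      have : σ z ∈ σ '' B := ⟨z, hz, rfl⟩
      rwa [hσB] at this
  have hSA : S ⊆ A := by
    intro s hs
    rw [hA]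
    refine ⟨0, fun _ => s, hs, rfl, by omega, ?_⟩
    intro i _
    exact fun hB => (hSB.ne_of_mem hs hB) rfl
  have hAB : ∀ x ∈ A, x ∉ B := by
    intro x hx
    rw [hA] at hx
    obtain ⟨k, w, -, hwk, -, hwB⟩ := hx
    rw [← hwk]; exact hwB k le_rfl
  have hAext : ∀ x ∈ A, ∀ y, 0 < P x y → y ∉ B → y ∈ A := by
    intro x hx y hxy hyB
    rw [hA] at hx ⊢
    obtain ⟨k, w, hw0, hwk, hwpos, hwB⟩ := hx
    refine ⟨k + 1, fun i => if i ≤ k then w i else y, by simp [hw0], by simp, ?_, ?_⟩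
    · intro i hi
      rcases Nat.lt_or_ge i k with h | h
      · have h1 : i ≤ k := le_of_lt h
        have h2 : i + 1 ≤ k := h
        simp only [h1, h2, if_pos]
        exact hwpos i h
      · have hik : i = k := by omega
        subst hik
        simp only [le_rfl, if_pos, if_neg (by omega : ¬ i + 1 ≤ i)]
        rwa [hwk]
    · intro i hi
      by_cases h : i ≤ k
      · simp only [h, if_pos]; exact hwB i h
      · simp only [h, if_neg]; simpa using hyB
  have hdisjA : Disjoint A (σ '' A) := by
    rw [Set.disjoint_left]
    rintro x hxA ⟨a, haA, hax⟩
    rw [hA] at hxA haA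
    obtain ⟨n, w, hw0, hwn, hwpos, hwB⟩ := hxA
    obtain ⟨m, u, hu0, hum, hupos, huB⟩ := haA
    set r : ℕ → Ω := fun i => σ (u (m - i)) with hr
    set c : ℕ → Ω := fun i => if i ≤ n then w i else r (i - n) with hc
    have hrc : ∀ i, n ≤ i → c i = r (i - n) := by
      intro i hi
      rcases eq_or_lt_of_le hi with h | h
      · subst h
        simp only [hc, le_rfl, if_pos, Nat.sub_self]
        rw [hr]
        simp only [Nat.sub_zero]
        rw [hum, hax, hwn]
      · simp only [hc, if_neg (by omega : ¬ i ≤ n)]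
    have hc0 : c 0 ∈ S := by
      simp only [hc, if_pos (Nat.zero_le n)]; exact hw0
    have hcend : c (n + m) ∈ S' := by
      rw [hrc (n + m) (by omega)]
      simp only [hr, Nat.add_sub_cancel_left, Nat.sub_self]
      rw [← hσS]
      exact ⟨u 0, hu0, rfl⟩
    have htrans : ∀ i < n + m, 0 < P (c i) (c (i + 1)) := by
      intro i hi
      rcases Nat.lt_or_ge i n with h | h
      · simp only [hc, if_pos (le_of_lt h), if_pos (by omega : i + 1 ≤ n)]
        exact hwpos i h
      · rw [hrc i h, hrc (i + 1) (by omega)]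
        set j := i - n with hj
        have hjm : j < m := by omega
        have h1 : i + 1 - n = j + 1 := by omega
        rw [h1]
        simp only [hr]
        rw [hPσ]
        have hl : m - (j + 1) + 1 = m - j := by omega
        have := hupos (m - (j + 1)) (by omega)
        rw [hl] at this
        exact hPsym _ _ this
    obtain ⟨i, hile, hiB⟩ := hpass (n + m) c hc0 hcend htrans
    rcases Nat.lt_or_ge n i with h | h
    · rw [hrc i (le_of_lt h)] at hiB
      simp only [hr] at hiB
      rw [hσBmem] at hiB
      exact huB (m - (i - n)) (by omega) hiB
    · simp only [hc, if_pos h] at hiB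
      exact hwB i h hiB
  -- conversion of finsums to finset sums
  have hfins : ∀ (C : Set Ω), (∑ᶠ x ∈ C, π x) = ∑ x ∈ C.toFinset, π x := by
    intro C
    conv_lhs => rw [← Set.coe_toFinset C]
    exact finsum_mem_coe_finset _ _
  have hσinj : Function.Injective σ := Function.LeftInverse.injective hinv
  have hA'F : (σ '' A).toFinset = A.toFinset.image σ := by
    ext z
    simp [Set.mem_toFinset]
  have hsumA' : ∑ x ∈ (σ '' A).toFinset, π x = ∑ x ∈ A.toFinset, π x := by
    rw [hA'F, Finset.sum_image (fun a _ b _ h => hσinj h)]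
    exact Finset.sum_congr rfl fun x _ => hπσ x
  have hdisjF : Disjoint A.toFinset (σ '' A).toFinset := by
    rw [Set.disjoint_toFinset]
    exact hdisjA
  have hhalf : ∑ x ∈ A.toFinset, π x ≤ 1 / 2 := by
    have hun : ∑ x ∈ A.toFinset ∪ (σ '' A).toFinset, π x
        = ∑ x ∈ A.toFinset, π x + ∑ x ∈ (σ '' A).toFinset, π x :=
      Finset.sum_union hdisjF
    have hle : ∑ x ∈ A.toFinset ∪ (σ '' A).toFinset, π x ≤ 1 := by
      rw [← hπ1]
      exact Finset.sum_le_sum_of_subset_of_nonneg (Finset.subset_univ _)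
        (fun x _ _ => hπ0 x)
    rw [hun, hsumA'] at hle
    linarith
  constructor
  · rw [hfins A]; exact hhalf
  -- second part
  have hfins2 : ∀ (C : Set Ω), (∑ᶠ x ∈ C, π x) = ∑ x, (if x ∈ C then π x else 0) := by
    intro C
    rw [hfins C, ← Finset.sum_filter]
    congr 1
    ext z
    simp [Set.mem_toFinset]
  set g : Ω → ℝ := fun x => (if x ∈ A then (1:ℝ) else 0)
    - (if x ∈ σ '' A then (1:ℝ) else 0) with hgdef
  have hgapp : ∀ x, g x = (if x ∈ A then (1:ℝ) else 0)
    - (if x ∈ σ '' A then (1:ℝ) else 0) := fun x => rfl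
  have hgA : ∀ x ∈ A, g x = 1 := by
    intro x hx
    have hx' : x ∉ σ '' A := fun hc => (Set.disjoint_left.mp hdisjA hx) hc
    rw [hgapp x, if_pos hx, if_neg hx']
    norm_num
  have hgA' : ∀ x ∈ σ '' A, g x = -1 := by
    intro x hx
    have hx' : x ∉ A := fun hc => (Set.disjoint_left.mp hdisjA hc) hx
    rw [hgapp x, if_neg hx', if_pos hx]
    norm_num
  have hBA' : ∀ x ∈ B, x ∉ σ '' A := by
    rintro x hxB ⟨a, haA, rfl⟩
    exact hAB a haA ((hσBmem a).mp hxB)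
  have hgB : ∀ x ∈ B, g x = 0 := by
    intro x hx
    rw [hgapp x, if_neg (fun h => hAB x h hx), if_neg (hBA' x hx)]
    norm_num
  have hswap : ∀ f : Ω → ℝ, ∑ x, f (σ x) = ∑ x, f x := by
    intro f
    exact Fintype.sum_equiv (Function.Involutive.toPerm σ hinv) _ _ (fun x => rfl)
  have hσA : ∀ x, σ x ∈ σ '' A ↔ x ∈ A := by
    intro x
    constructor
    · rintro ⟨a, ha, he⟩
      rwa [← hσinj he]
    · intro h
      exact ⟨x, h, rfl⟩
  have hAA'sum : ∑ x, (if x ∈ σ '' A then π x else 0) = ∑ x, (if x ∈ A then π x else 0) := by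
    rw [← hswap (fun x => if x ∈ σ '' A then π x else 0)]
    refine Finset.sum_congr rfl fun x _ => ?_
    by_cases h : x ∈ A
    · rw [if_pos ((hσA x).mpr h), if_pos h, hπσ]
    · rw [if_neg (fun hc => h ((hσA x).mp hc)), if_neg h]
  have hgmean : ∑ x, π x * g x = 0 := by
    have hpt : ∀ x, π x * g x
        = (if x ∈ A then π x else 0) - (if x ∈ σ '' A then π x else 0) := by
      intro x
      rw [hgapp x]
      by_cases h1 : x ∈ A <;> by_cases h2 : x ∈ σ '' A <;> simp [h1, h2]
    rw [Finset.sum_congr rfl fun x _ => hpt x, Finset.sum_sub_distrib, hAA'sum, sub_self]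
  have hg0 : g ≠ 0 := by
    obtain ⟨s₀, hs₀⟩ := hSne
    intro hc
    have := congrFun hc s₀
    rw [hgA s₀ (hSA hs₀)] at this
    norm_num at this
  obtain ⟨lam, hspec, hlam1, hineq⟩ :=
    second_eigenvalue_bound P hnn hrow π hπpos hπ1 hrev hirr g hg0 hgmean
  set N := ∑ x, π x * g x ^ 2 with hNdef
  set Q := ∑ x, ∑ y, π x * P x y * g x * g y with hQdef
  set πA := ∑ x, (if x ∈ A then π x else 0) with hπAdef
  set πB := ∑ x, (if x ∈ B then π x else 0) with hπBdef
  set πS := ∑ x, (if x ∈ S then π x else 0) with hπSdef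
  have hN : N = 2 * πA := by
    have hpt : ∀ x, π x * g x ^ 2
        = (if x ∈ A then π x else 0) + (if x ∈ σ '' A then π x else 0) := by
      intro x
      rw [hgapp x]
      by_cases h1 : x ∈ A <;> by_cases h2 : x ∈ σ '' A
      · exact absurd h2 (Set.disjoint_left.mp hdisjA h1)
      · rw [if_pos h1, if_neg h2, if_pos h1, if_neg h2]; ring
      · rw [if_neg h1, if_pos h2, if_neg h1, if_pos h2]; ring
      · rw [if_neg h1, if_neg h2, if_neg h1, if_neg h2]; ring
    rw [hNdef, Finset.sum_congr rfl fun x _ => hpt x, Finset.sum_add_distrib, hAA'sum,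
      ← hπAdef]
    ring
  have hgvals : ∀ x, g x = 1 ∨ g x = -1 ∨ g x = 0 := by
    intro x
    by_cases h1 : x ∈ A
    · exact Or.inl (hgA x h1)
    · by_cases h2 : x ∈ σ '' A
      · exact Or.inr (Or.inl (hgA' x h2))
      · right; right; rw [hgapp x, if_neg h1, if_neg h2]; norm_num
  have hcolsum : ∀ y, ∑ x, π x * P x y = π y := by
    intro y
    calc ∑ x, π x * P x y = ∑ x, π y * P y x :=
          Finset.sum_congr rfl fun x _ => hrev x y
      _ = π y * ∑ x, P y x := by rw [Finset.mul_sum]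
      _ = π y := by rw [hrow, mul_one]
  have hNQ : N - Q ≤ πB := by
    have hNexp : N = ∑ x, ∑ y, π x * P x y * g x * g x := by
      rw [hNdef]
      refine Finset.sum_congr rfl fun x _ => ?_
      calc π x * g x ^ 2 = π x * g x ^ 2 * ∑ y, P x y := by rw [hrow, mul_one]
        _ = ∑ y, π x * P x y * g x * g x := by
              rw [Finset.mul_sum]
              exact Finset.sum_congr rfl fun y _ => by ring
    have hterm : ∀ x y, π x * P x y * g x * g x - π x * P x y * g x * g y
        ≤ π x * P x y * (if y ∈ B then 1 else 0) := by
      intro x y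
      by_cases hyB : y ∈ B
      · rw [hgB y hyB, if_pos hyB, mul_zero, sub_zero, mul_one]
        have hP : 0 ≤ π x * P x y := mul_nonneg (hπpos x).le (hnn x y)
        rcases hgvals x with h | h | h <;> rw [h] <;> nlinarith
      · rw [if_neg hyB, mul_zero]
        rcases lt_or_eq_of_le (hnn x y) with hP | hP
        · by_cases hxA : x ∈ A
          · have hyA : y ∈ A := hAext x hxA y hP hyB
            rw [hgA x hxA, hgA y hyA]
            norm_num
          · by_cases hxA' : x ∈ σ '' A
            · obtain ⟨a, haA, hax⟩ := hxA'
              have ha' : a = σ x := by rw [← hax, hinv]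
              have hP' : 0 < P a (σ y) := by
                have he : P a (σ y) = P x y := by rw [ha', hPσ]
                rw [he]; exact hP
              have hσyB : σ y ∉ B := fun hc => hyB ((hσBmem y).mp hc)
              have hσyA : σ y ∈ A := hAext a haA (σ y) hP' hσyB
              have hyA' : y ∈ σ '' A := ⟨σ y, hσyA, hinv y⟩
              rw [hgA' x ⟨a, haA, hax⟩, hgA' y hyA']
              norm_num
            · have hgx : g x = 0 := by rw [hgapp x, if_neg hxA, if_neg hxA']; norm_num
              rw [hgx]
              norm_num
        · rw [← hP]
          norm_num
    calc N - Q = ∑ x, ∑ y, (π x * P x y * g x * g x - π x * P x y * g x * g y) := by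
          rw [hNexp, hQdef, ← Finset.sum_sub_distrib]
          exact Finset.sum_congr rfl fun x _ => (Finset.sum_sub_distrib _ _).symm
      _ ≤ ∑ x, ∑ y, π x * P x y * (if y ∈ B then 1 else 0) := by
          refine Finset.sum_le_sum fun x _ => Finset.sum_le_sum fun y _ => hterm x y
      _ = ∑ y, (if y ∈ B then 1 else 0) * ∑ x, π x * P x y := by
          rw [Finset.sum_comm]
          refine Finset.sum_congr rfl fun y _ => ?_
          rw [Finset.mul_sum]
          exact Finset.sum_congr rfl fun x _ => by ring
      _ = ∑ y, (if y ∈ B then π y else 0) := by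
          refine Finset.sum_congr rfl fun y _ => ?_
          rw [hcolsum y]
          by_cases h : y ∈ B <;> simp [h]
      _ = πB := by rw [hπBdef]
  have hπSpos : 0 < πS := by
    obtain ⟨s₀, hs₀⟩ := hSne
    have hle : (if s₀ ∈ S then π s₀ else 0) ≤ ∑ x, (if x ∈ S then π x else 0) :=
      Finset.single_le_sum (f := fun x => if x ∈ S then π x else 0)
        (fun x _ => by by_cases h : x ∈ S <;> simp [h, (hπpos x).le]) (Finset.mem_univ s₀)
    rw [if_pos hs₀] at hle
    rw [hπSdef]
    linarith [hπpos s₀]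
  have hπSA : πS ≤ πA := by
    rw [hπSdef, hπAdef]
    refine Finset.sum_le_sum fun x _ => ?_
    by_cases h : x ∈ S
    · rw [if_pos h, if_pos (hSA h)]
    · rw [if_neg h]
      by_cases h2 : x ∈ A <;> simp [h2, (hπpos x).le]
  have hπB0 : 0 ≤ πB :=
    Finset.sum_nonneg fun x _ => by by_cases h : x ∈ B <;> simp [h, (hπpos x).le]
  have hsup : lam ≤ sSup (spectrum ℝ P \ {1}) := by
    refine le_csSup ⟨1, ?_⟩ ⟨hspec, hlam1⟩
    rintro μ ⟨hμ, -⟩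
    exact spec_le_one P hnn hrow μ hμ
  rw [hfins2 B, hfins2 S, ← hπBdef, ← hπSdef]
  have hfin : 1 - lam ≤ 2 * πB / πS := by
    rw [le_div_iff₀ hπSpos]
    have hdN : (1 - lam) * N ≤ πB := by nlinarith [hineq, hNQ]
    rcases le_or_gt (1 - lam) 0 with hd | hd
    · nlinarith
    · nlinarith [mul_le_mul_of_nonneg_left hπSA hd.le]
  linarith [hsup]
end
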